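/- arXiv:2408.03577 — 3 statements merged into one kernel-verified Lean document; each statement's English description precedes it below -/
import Mathlib

section
/- Let Γ be a nonempty parameter-bounded family of Hénon-form maps, and let R > 1 and ρ > 1 be such that every h ∈ Γ satisfies condition (A) for (R, ρ). Then for every sequence γ = (γ_j)_{j∈ℤ} with all γ_j ∈ Γ, the sequence of functions G_{γ,n}⁺ converges pointwise on ℂ² to a function G_γ⁺, and the convergence is uniform on (the closure of V_R⁺) uniformly over all such sequences γ; that is, sup over γ ∈ Γ^ℤ and z in the closure of V_R⁺ of |G_{γ,n}⁺(z) − G_γ⁺(z)| tends to 0 as n → ∞. -/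
open Complex Filter Set Topology MeasureTheory Bornology

noncomputable section

/-- A Hénon-form map `f(x,y) = (y + a, p(y) - δ x)` with `δ ≠ 0` and `deg p ≥ 2`. -/
structure HenonMap : Type where
  a : ℂ
  δ : ℂ
  p : Polynomial ℂ
  hδ : δ ≠ 0
  hdeg : 2 ≤ p.natDegree

namespace HenonMap

/-- The map itself. -/
def toFun (f : HenonMap) (z : ℂ × ℂ) : ℂ × ℂ :=
  (z.2 + f.a, f.p.eval z.2 - f.δ * z.1)

/-- The inverse map `f⁻¹(x,y) = (δ⁻¹ (p(x - a) - y), x - a)`. -/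
def invFun (f : HenonMap) (z : ℂ × ℂ) : ℂ × ℂ :=
  (f.δ⁻¹ * (f.p.eval (z.1 - f.a) - z.2), z.1 - f.a)

end HenonMap

/-- `V_R⁺ = {(x,y) : max(R,|x|) < |y|}`. -/
def VPlus (R : ℝ) : Set (ℂ × ℂ) := {z | max R (‖z.1‖) < ‖z.2‖}

/-- `V_R⁻ = {(x,y) : max(R,|y|) < |x|}`. -/
def VMinus (R : ℝ) : Set (ℂ × ℂ) := {z | max R (‖z.2‖) < ‖z.1‖}

/-- `D_R = {(x,y) : max(|x|,|y|) < R}`. -/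
def DDisk (R : ℝ) : Set (ℂ × ℂ) := {z | max (‖z.1‖) (‖z.2‖) < R}

/-- Condition (A) for `(R, ρ)`. -/
def CondA (f : HenonMap) (R ρ : ℝ) : Prop :=
  (∀ z ∈ closure (VPlus R),
    f.toFun z ∈ VPlus R ∧ ρ * ‖z.2‖ < ‖(f.toFun z).2‖) ∧
  (∀ z ∈ closure (VMinus R),
    f.invFun z ∈ VMinus R ∧ ρ * ‖z.1‖ < ‖(f.invFun z).1‖)

/-- A parameter-bounded family of Hénon-form maps. -/
def ParamBounded (Γ : Set HenonMap) : Prop :=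
  ∃ (D : ℕ) (A d₀ Δ m M : ℝ),
    2 ≤ D ∧ 0 ≤ A ∧ 0 < d₀ ∧ d₀ ≤ Δ ∧ 0 < m ∧ m ≤ M ∧
    ∀ f ∈ Γ,
      f.p.natDegree ≤ D ∧ ‖f.a‖ ≤ A ∧
      d₀ ≤ ‖f.δ‖ ∧ ‖f.δ‖ ≤ Δ ∧
      (∀ i : ℕ, ‖f.p.coeff i‖ ≤ M) ∧
      m ≤ ‖f.p.leadingCoeff‖

/-- Forward composition: `fwd γ n = γ_{n-1} ∘ ⋯ ∘ γ₀`. -/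
def fwd (γ : ℤ → HenonMap) : ℕ → (ℂ × ℂ) → ℂ × ℂ
  | 0 => id
  | n + 1 => fun z => (γ (n : ℤ)).toFun (fwd γ n z)

/-- Backward composition: `bwd γ n = γ_{-n}⁻¹ ∘ ⋯ ∘ γ_{-1}⁻¹`. -/
def bwd (γ : ℤ → HenonMap) : ℕ → (ℂ × ℂ) → ℂ × ℂ
  | 0 => id
  | n + 1 => fun z => (γ (-((n : ℤ) + 1))).invFun (bwd γ n z)

/-- `K_γ⁺` : points with bounded forward orbit. -/
def KPlus (γ : ℤ → HenonMap) : Set (ℂ × ℂ) :=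
  {z | IsBounded (Set.range fun n : ℕ => fwd γ n z)}

/-- `K_γ⁻` : points with bounded backward orbit. -/
def KMinus (γ : ℤ → HenonMap) : Set (ℂ × ℂ) :=
  {z | IsBounded (Set.range fun n : ℕ => bwd γ n z)}

/-- `I_γ⁺` : points whose forward orbit tends to infinity in norm. -/
def IPlus (γ : ℤ → HenonMap) : Set (ℂ × ℂ) :=
  {z | Tendsto (fun n : ℕ => ‖fwd γ n z‖) atTop atTop}

/-- `I_γ⁻` : points whose backward orbit tends to infinity in norm. -/
def IMinus (γ : ℤ → HenonMap) : Set (ℂ × ℂ) :=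
  {z | Tendsto (fun n : ℕ => ‖bwd γ n z‖) atTop atTop}

/-- The iterated shift: `(σⁿ γ)_j = γ_{j+n}`. -/
def shiftIter (γ : ℤ → HenonMap) (n : ℕ) : ℤ → HenonMap := fun j => γ (j + n)

/-- `log⁺ t = max (log t) 0`. -/
def logPlus (t : ℝ) : ℝ := max (Real.log t) 0

/-- `G_{γ,n}⁺(z) = (deg γ_{n-1} ⋯ deg γ₀)⁻¹ log⁺ ‖γ_{n-1} ∘ ⋯ ∘ γ₀ (z)‖`. -/
def GPlusN (γ : ℤ → HenonMap) (n : ℕ) (z : ℂ × ℂ) : ℝ :=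
  (∏ j ∈ Finset.range n, ((γ (j : ℤ)).p.natDegree : ℝ))⁻¹ * logPlus ‖fwd γ n z‖

/-- `G_{γ,n}⁻(z) = (deg γ_{-1} ⋯ deg γ_{-n})⁻¹ log⁺ ‖γ_{-n}⁻¹ ∘ ⋯ ∘ γ_{-1}⁻¹ (z)‖`. -/
def GMinusN (γ : ℤ → HenonMap) (n : ℕ) (z : ℂ × ℂ) : ℝ :=
  (∏ j ∈ Finset.range n, ((γ (-((j : ℤ) + 1))).p.natDegree : ℝ))⁻¹ * logPlus ‖bwd γ n z‖

/-! ### Auxiliary lemmas -/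

lemma poly_eval_upper (p : Polynomial ℂ) (M : ℝ) (hM : ∀ i, ‖p.coeff i‖ ≤ M)
    (y : ℂ) (ht : 1 ≤ ‖y‖) :
    ‖p.eval y‖ ≤ (p.natDegree + 1) * M * ‖y‖ ^ p.natDegree := by
  have hM0 : 0 ≤ M := (norm_nonneg _).trans (hM 0)
  rw [Polynomial.eval_eq_sum_range]
  calc ‖∑ i ∈ Finset.range (p.natDegree + 1), p.coeff i * y ^ i‖
      ≤ ∑ i ∈ Finset.range (p.natDegree + 1), ‖p.coeff i * y ^ i‖ :=
        norm_sum_le _ _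
    _ ≤ ∑ _i ∈ Finset.range (p.natDegree + 1), M * ‖y‖ ^ p.natDegree := by
        apply Finset.sum_le_sum
        intro i hi
        rw [norm_mul, norm_pow]
        exact mul_le_mul (hM i) (pow_le_pow_right₀ ht (Nat.lt_succ_iff.mp (Finset.mem_range.mp hi)))
          (pow_nonneg (norm_nonneg _) _) hM0
    _ = (p.natDegree + 1) * M * ‖y‖ ^ p.natDegree := by
        rw [Finset.sum_const, Finset.card_range]; ring

lemma poly_eval_lower (p : Polynomial ℂ) (M m : ℝ) (hM : ∀ i, ‖p.coeff i‖ ≤ M)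
    (hm : m ≤ ‖p.leadingCoeff‖)
    (y : ℂ) (ht : 1 ≤ ‖y‖) :
    m * ‖y‖ ^ p.natDegree - p.natDegree * M * ‖y‖ ^ (p.natDegree - 1)
      ≤ ‖p.eval y‖ := by
  have hM0 : 0 ≤ M := (norm_nonneg _).trans (hM 0)
  set d := p.natDegree with hd
  have hev : p.eval y = (∑ i ∈ Finset.range d, p.coeff i * y ^ i) + p.coeff d * y ^ d := by
    rw [Polynomial.eval_eq_sum_range, Finset.sum_range_succ]
  set S := ∑ i ∈ Finset.range d, p.coeff i * y ^ i with hS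
  have hSle : ‖S‖ ≤ d * M * ‖y‖ ^ (d - 1) := by
    calc ‖S‖ ≤ ∑ i ∈ Finset.range d, ‖p.coeff i * y ^ i‖ :=
          norm_sum_le _ _
      _ ≤ ∑ _i ∈ Finset.range d, M * ‖y‖ ^ (d - 1) := by
          apply Finset.sum_le_sum
          intro i hi
          rw [norm_mul, norm_pow]
          have hi' : i ≤ d - 1 := by have := Finset.mem_range.mp hi; omega
          exact mul_le_mul (hM i) (pow_le_pow_right₀ ht hi')
            (pow_nonneg (norm_nonneg _) _) hM0
      _ ≤ d * M * ‖y‖ ^ (d - 1) := by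
          rw [Finset.sum_const, Finset.card_range, nsmul_eq_mul]; rw [mul_assoc]
  have hlead : m * ‖y‖ ^ d ≤ ‖p.coeff d * y ^ d‖ := by
    rw [norm_mul, norm_pow]
    exact mul_le_mul_of_nonneg_right (hm.trans_eq (by rw [Polynomial.leadingCoeff]))
      (pow_nonneg (norm_nonneg _) _)
  have htri : ‖p.coeff d * y ^ d‖ ≤ ‖p.eval y‖ + ‖S‖ := by
    have := norm_add_le (S + p.coeff d * y ^ d) (-S)
    rw [show S + p.coeff d * y ^ d + -S = p.coeff d * y ^ d from by ring,
      norm_neg] at this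
    rw [hev]; linarith [this]
  linarith

lemma closure_vplus_sub (R : ℝ) :
    closure (VPlus R) ⊆ {z : ℂ × ℂ | max R (‖z.1‖) ≤ ‖z.2‖} := by
  apply closure_minimal
  · intro z hz
    have h : max R (‖z.1‖) < ‖z.2‖ := hz
    exact h.le
  · apply isClosed_le
    · exact continuous_const.max (continuous_norm.comp continuous_fst)
    · exact continuous_norm.comp continuous_snd

/-- The uniform constant. -/
def CC (D : ℕ) (Δ m M R : ℝ) : ℝ :=
  Real.log (M * (D + 1) + Δ + 1) + Real.log (max R (2 * (M * D + Δ + 1) / m))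
    + |Real.log (m / 2)| + 1

lemma CC_pos (D : ℕ) (Δ m M R : ℝ) (hΔ : 0 < Δ) (hm : 0 < m) (hmM : m ≤ M) (hR : 1 < R) :
    0 < CC D Δ m M R := by
  have hM : 0 < M := hm.trans_le hmM
  have h1 : (1:ℝ) ≤ M * (D + 1) + Δ + 1 := by nlinarith [Nat.cast_nonneg (α := ℝ) D]
  have h2 : (1:ℝ) ≤ max R (2 * (M * D + Δ + 1) / m) := le_trans hR.le (le_max_left _ _)
  have := Real.log_nonneg h1
  have := Real.log_nonneg h2
  have := abs_nonneg (Real.log (m / 2))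
  unfold CC; linarith

set_option maxHeartbeats 1000000 in
lemma step_est {R ρ : ℝ} (hR : 1 < R) (hρ : 1 < ρ) {f : HenonMap} (hAf : CondA f R ρ)
    {D : ℕ} {Δ m M : ℝ} (hm : 0 < m) (hΔ : 0 < Δ) (hmM : m ≤ M)
    (hfD : f.p.natDegree ≤ D) (hfδ : ‖f.δ‖ ≤ Δ)
    (hfM : ∀ i, ‖f.p.coeff i‖ ≤ M) (hfm : m ≤ ‖f.p.leadingCoeff‖)
    {z : ℂ × ℂ} (hz : z ∈ closure (VPlus R)) :
    f.toFun z ∈ VPlus R ∧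
    |(f.p.natDegree : ℝ)⁻¹ * Real.log (‖(f.toFun z).2‖)
      - Real.log (‖z.2‖)| ≤ CC D Δ m M R := by
  obtain ⟨hmem, hgrow⟩ := hAf.1 z hz
  refine ⟨hmem, ?_⟩
  have hM : 0 < M := hm.trans_le hmM
  set d := f.p.natDegree with hdd
  have hd2 : 2 ≤ d := f.hdeg
  have hdD : d ≤ D := hfD
  have hd0 : (0:ℝ) < (d:ℝ) := by exact_mod_cast (by omega : 0 < d)
  set t := ‖z.2‖ with htdef
  have hzc := closure_vplus_sub R hz
  have hRt : R ≤ t := le_trans (le_max_left _ _) hzc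
  have hxt : ‖z.1‖ ≤ t := le_trans (le_max_right _ _) hzc
  have ht1 : 1 < t := hR.trans_le hRt
  set s := ‖(f.toFun z).2‖ with hsdef
  have ht0 : 0 < t := by linarith [hR.trans_le hRt]
  have hts : t < s := by
    have h1 : 1 * t < ρ * t := (mul_lt_mul_of_pos_right hρ ht0)
    rw [one_mul] at h1
    exact h1.trans hgrow
  have hs1 : 1 < s := ht1.trans hts
  have hs0 : 0 < s := by linarith
  set K := M * (D + 1) + Δ + 1 with hKdef
  have hK1 : (1:ℝ) < K := by nlinarith [Nat.cast_nonneg (α := ℝ) D]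
  have htd0 : (0:ℝ) < t ^ d := pow_pos ht0 d
  -- upper bound
  have hsub : (f.toFun z).2 = f.p.eval z.2 - f.δ * z.1 := rfl
  have hup : s ≤ K * t ^ d := by
    have h1 : s ≤ ‖f.p.eval z.2‖ + ‖f.δ * z.1‖ := by
      rw [hsdef, hsub]; exact norm_sub_le _ _
    have h2 : ‖f.p.eval z.2‖ ≤ (D + 1) * M * t ^ d := by
      refine le_trans (poly_eval_upper f.p M hfM z.2 ht1.le) ?_
      have : ((d:ℝ) + 1) ≤ (D + 1 : ℝ) := by exact_mod_cast by omega
      exact mul_le_mul_of_nonneg_right (mul_le_mul_of_nonneg_right this hM.le) htd0.le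
    have h3 : ‖f.δ * z.1‖ ≤ Δ * t ^ d := by
      rw [norm_mul]
      have htle : t ≤ t ^ d := le_self_pow₀ ht1.le (by omega)
      calc ‖f.δ‖ * ‖z.1‖ ≤ Δ * t :=
            mul_le_mul hfδ hxt (norm_nonneg _) hΔ.le
        _ ≤ Δ * t ^ d := mul_le_mul_of_nonneg_left htle hΔ.le
    calc s ≤ ((D + 1) * M + Δ) * t ^ d := by linarith
      _ ≤ K * t ^ d := by apply mul_le_mul_of_nonneg_right _ htd0.le; rw [hKdef]; nlinarith
  have hlogup : Real.log s ≤ Real.log K + d * Real.log t := by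
    calc Real.log s ≤ Real.log (K * t ^ d) := Real.log_le_log hs0 hup
      _ = Real.log K + d * Real.log t := by
          rw [Real.log_mul (by positivity) (by positivity), Real.log_pow]
  have hupF : (d:ℝ)⁻¹ * Real.log s - Real.log t ≤ Real.log K := by
    have h4 : (d:ℝ)⁻¹ * Real.log s ≤ (d:ℝ)⁻¹ * (Real.log K + d * Real.log t) :=
      mul_le_mul_of_nonneg_left hlogup (by positivity)
    have h5 : (d:ℝ)⁻¹ * (Real.log K + d * Real.log t)
        = (d:ℝ)⁻¹ * Real.log K + Real.log t := by field_simp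
    have h6 : (d:ℝ)⁻¹ * Real.log K ≤ Real.log K := by
      have hlK : 0 ≤ Real.log K := Real.log_nonneg hK1.le
      have : (d:ℝ)⁻¹ ≤ 1 := by
        rw [inv_le_one_iff₀]; right; exact Nat.one_le_cast.mpr (by omega)
      nlinarith
    linarith
  -- lower bound
  set R₁ := max R (2 * (M * D + Δ + 1) / m) with hR₁def
  have hR₁1 : 1 < R₁ := hR.trans_le (le_max_left _ _)
  have hlow : -(Real.log R₁ + |Real.log (m / 2)|) ≤ (d:ℝ)⁻¹ * Real.log s - Real.log t := by
    rcases le_or_gt t R₁ with hcase | hcase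
    · -- small t
      have h1 : Real.log t ≤ Real.log s := Real.log_le_log ht0 (by linarith)
      have h2 : Real.log t ≤ Real.log R₁ := Real.log_le_log ht0 hcase
      have hlt0 : 0 ≤ Real.log t := Real.log_nonneg ht1.le
      have h3 : (d:ℝ)⁻¹ * Real.log t ≤ (d:ℝ)⁻¹ * Real.log s :=
        mul_le_mul_of_nonneg_left h1 (by positivity)
      have h4 : 0 ≤ (d:ℝ)⁻¹ * Real.log t := by positivity
      have := abs_nonneg (Real.log (m / 2))
      linarith
    · -- large t
      have hmt : 2 * (M * D + Δ + 1) ≤ m * t := by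
        have h0 : 2 * (M * D + Δ + 1) / m ≤ t := le_trans (le_max_right _ _) hcase.le
        calc 2 * (M * D + Δ + 1) = m * (2 * (M * D + Δ + 1) / m) := by field_simp
          _ ≤ m * t := mul_le_mul_of_nonneg_left h0 hm.le
      have htd1 : (0:ℝ) < t ^ (d - 1) := pow_pos ht0 _
      have hpow : t ^ (d - 1) * t = t ^ d := by
        rw [← pow_succ]; congr 1; omega
      have h1 : m * t ^ d - (d:ℝ) * M * t ^ (d - 1) ≤ ‖f.p.eval z.2‖ :=
        poly_eval_lower f.p M m hfM hfm z.2 ht1.le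
      have h2 : ‖f.δ * z.1‖ ≤ Δ * t ^ (d - 1) := by
        rw [norm_mul]
        have htle : t ≤ t ^ (d - 1) := le_self_pow₀ ht1.le (by omega)
        calc ‖f.δ‖ * ‖z.1‖ ≤ Δ * t :=
              mul_le_mul hfδ hxt (norm_nonneg _) hΔ.le
          _ ≤ Δ * t ^ (d - 1) := mul_le_mul_of_nonneg_left htle hΔ.le
      have h3 : ‖f.p.eval z.2‖ - ‖f.δ * z.1‖ ≤ s := by
        rw [hsdef, hsub]; exact norm_sub_norm_le _ _
      have hdM : (d:ℝ) * M * t ^ (d - 1) + Δ * t ^ (d - 1) ≤ m / 2 * t ^ d := by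
        have hdDM : (d:ℝ) * M + Δ ≤ M * D + Δ + 1 := by
          have hcast : (d:ℝ) ≤ (D:ℝ) := by exact_mod_cast hdD
          have := mul_le_mul_of_nonneg_right hcast hM.le
          linarith
        have hhalf : (d:ℝ) * M + Δ ≤ (m / 2) * t := by
          have : m / 2 * t = (m * t) / 2 := by ring
          linarith
        calc (d:ℝ) * M * t ^ (d - 1) + Δ * t ^ (d - 1)
            = ((d:ℝ) * M + Δ) * t ^ (d - 1) := by ring
          _ ≤ (m / 2 * t) * t ^ (d - 1) := mul_le_mul_of_nonneg_right hhalf htd1.le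
          _ = m / 2 * t ^ d := by rw [mul_assoc, mul_comm t (t ^ (d-1)), hpow]
      have hslow : m / 2 * t ^ d ≤ s := by linarith
      have hlog1 : Real.log (m / 2) + d * Real.log t ≤ Real.log s := by
        calc Real.log (m / 2) + d * Real.log t = Real.log (m / 2 * t ^ d) := by
              rw [Real.log_mul (by positivity) (by positivity), Real.log_pow]
          _ ≤ Real.log s := Real.log_le_log (by positivity) hslow
      have h4 : (d:ℝ)⁻¹ * (Real.log (m / 2) + d * Real.log t) ≤ (d:ℝ)⁻¹ * Real.log s :=
        mul_le_mul_of_nonneg_left hlog1 (by positivity)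
      have h5 : (d:ℝ)⁻¹ * (Real.log (m / 2) + d * Real.log t)
          = (d:ℝ)⁻¹ * Real.log (m / 2) + Real.log t := by field_simp
      have h6 : -|Real.log (m / 2)| ≤ (d:ℝ)⁻¹ * Real.log (m / 2) := by
        rcases le_or_gt 0 (Real.log (m / 2)) with hsign | hsign
        · have : 0 ≤ (d:ℝ)⁻¹ * Real.log (m / 2) := by positivity
          linarith [abs_nonneg (Real.log (m / 2))]
        · have hinv1 : (d:ℝ)⁻¹ ≤ 1 := by
            rw [inv_le_one_iff₀]; right; exact Nat.one_le_cast.mpr (by omega)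
          have habs : |Real.log (m / 2)| = -Real.log (m / 2) := abs_of_neg hsign
          have hmul := mul_le_mul_of_nonpos_right hinv1 hsign.le
          rw [one_mul] at hmul
          rw [habs]
          linarith
      have hlR₁ : 0 ≤ Real.log R₁ := Real.log_nonneg hR₁1.le
      linarith
  rw [abs_le]
  have hlK : 0 ≤ Real.log K := Real.log_nonneg hK1.le
  have hlR₁ : 0 ≤ Real.log R₁ := Real.log_nonneg hR₁1.le
  have habs0 : 0 ≤ |Real.log (m / 2)| := abs_nonneg _
  constructor
  · unfold CC; rw [← hKdef, ← hR₁def]; linarith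
  · unfold CC; rw [← hKdef, ← hR₁def]; linarith

lemma logPlus_closure {R : ℝ} (hR : 1 < R) {z : ℂ × ℂ} (hz : z ∈ closure (VPlus R)) :
    logPlus ‖z‖ = Real.log (‖z.2‖) := by
  have h := closure_vplus_sub R hz
  have hx : ‖z.1‖ ≤ ‖z.2‖ := le_trans (le_max_right _ _) h
  have hR2 : R ≤ ‖z.2‖ := le_trans (le_max_left _ _) h
  have hnorm : ‖z‖ = ‖z.2‖ := by
    rw [Prod.norm_def]
    exact max_eq_right hx
  rw [logPlus, hnorm, max_eq_left]
  exact Real.log_nonneg (by linarith)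

lemma fwd_closure {R ρ : ℝ} {γ : ℤ → HenonMap} (hAγ : ∀ j : ℤ, CondA (γ j) R ρ)
    {z : ℂ × ℂ} (hz : z ∈ closure (VPlus R)) (n : ℕ) : fwd γ n z ∈ closure (VPlus R) := by
  induction n with
  | zero => exact hz
  | succ n ih =>
      show (γ (n : ℤ)).toFun (fwd γ n z) ∈ closure (VPlus R)
      exact subset_closure ((hAγ (n : ℤ)).1 _ ih).1

/-- Bundled hypotheses on a sequence. -/
def SeqOK (R ρ : ℝ) (D : ℕ) (Δ m M : ℝ) (γ : ℤ → HenonMap) : Prop :=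
  ∀ j : ℤ, CondA (γ j) R ρ ∧ (γ j).p.natDegree ≤ D ∧ ‖(γ j).δ‖ ≤ Δ ∧
    (∀ i, ‖(γ j).p.coeff i‖ ≤ M) ∧ m ≤ ‖(γ j).p.leadingCoeff‖

lemma prod_deg_ge {γ : ℤ → HenonMap} (n : ℕ) :
    (2:ℝ) ^ n ≤ ∏ j ∈ Finset.range n, ((γ (j : ℤ)).p.natDegree : ℝ) := by
  rw [show ((2:ℝ) ^ n) = ∏ _j ∈ Finset.range n, (2:ℝ) by
    rw [Finset.prod_const, Finset.card_range]]
  refine Finset.prod_le_prod (fun i _ => by norm_num) (fun i _ => ?_)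
  exact_mod_cast (γ (i : ℤ)).hdeg

lemma prod_deg_pos {γ : ℤ → HenonMap} (n : ℕ) :
    (0:ℝ) < ∏ j ∈ Finset.range n, ((γ (j : ℤ)).p.natDegree : ℝ) :=
  lt_of_lt_of_le (by positivity) (prod_deg_ge n)

lemma diff_est {R ρ : ℝ} (hR : 1 < R) (hρ : 1 < ρ) {D : ℕ} {Δ m M : ℝ}
    (hm : 0 < m) (hΔ : 0 < Δ) (hmM : m ≤ M)
    {γ : ℤ → HenonMap} (hγ : SeqOK R ρ D Δ m M γ)
    {z : ℂ × ℂ} {n : ℕ} (hzn : fwd γ n z ∈ closure (VPlus R)) :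
    |GPlusN γ (n+1) z - GPlusN γ n z| ≤ CC D Δ m M R * (1/2 : ℝ) ^ n := by
  obtain ⟨hAn, hDn, hδn, hMn, hmn⟩ := hγ (n : ℤ)
  have hstep := step_est hR hρ hAn hm hΔ hmM hDn hδn hMn hmn hzn
  have hl1 : logPlus ‖fwd γ n z‖ = Real.log (‖(fwd γ n z).2‖) :=
    logPlus_closure hR hzn
  have hl2 : logPlus ‖fwd γ (n+1) z‖
      = Real.log (‖((γ (n : ℤ)).toFun (fwd γ n z)).2‖) := by
    exact logPlus_closure hR (subset_closure hstep.1)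
  set P := ∏ j ∈ Finset.range n, ((γ (j : ℤ)).p.natDegree : ℝ) with hPdef
  have hP2 : (2:ℝ) ^ n ≤ P := prod_deg_ge n
  have hP0 : 0 < P := prod_deg_pos n
  have hprod : ∏ j ∈ Finset.range (n+1), ((γ (j : ℤ)).p.natDegree : ℝ)
      = P * ((γ (n : ℤ)).p.natDegree : ℝ) := Finset.prod_range_succ _ _
  have hexp : GPlusN γ (n+1) z - GPlusN γ n z
      = P⁻¹ * (((γ (n : ℤ)).p.natDegree : ℝ)⁻¹
          * Real.log (‖((γ (n : ℤ)).toFun (fwd γ n z)).2‖)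
        - Real.log (‖(fwd γ n z).2‖)) := by
    rw [GPlusN, GPlusN, hprod, hl1]
    rw [show fwd γ (n+1) z = (γ (n : ℤ)).toFun (fwd γ n z) from rfl] at *
    rw [hl2, mul_inv]
    ring
  rw [hexp, abs_mul, abs_of_pos (inv_pos.mpr hP0)]
  have hCC0 : 0 ≤ CC D Δ m M R := (CC_pos D Δ m M R hΔ hm hmM hR).le
  have hPinv : P⁻¹ ≤ (1/2 : ℝ) ^ n := by
    rw [show ((1:ℝ)/2) ^ n = ((2:ℝ) ^ n)⁻¹ by rw [one_div, inv_pow]]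
    exact inv_anti₀ (by positivity) hP2
  calc P⁻¹ * |_ - _| ≤ (1/2 : ℝ) ^ n * CC D Δ m M R :=
        mul_le_mul hPinv hstep.2 (abs_nonneg _) (by positivity)
    _ = CC D Δ m M R * (1/2 : ℝ) ^ n := by ring

lemma tele_est {R ρ : ℝ} (hR : 1 < R) (hρ : 1 < ρ) {D : ℕ} {Δ m M : ℝ}
    (hm : 0 < m) (hΔ : 0 < Δ) (hmM : m ≤ M)
    {γ : ℤ → HenonMap} (hγ : SeqOK R ρ D Δ m M γ)
    {z : ℂ × ℂ} (hz : z ∈ closure (VPlus R)) (k : ℕ) :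
    ∀ n, k ≤ n → |GPlusN γ n z - GPlusN γ k z|
      ≤ 2 * CC D Δ m M R * ((1/2 : ℝ) ^ k - (1/2 : ℝ) ^ n) := by
  intro n hn
  induction n, hn using Nat.le_induction with
  | base => simp
  | succ n hn ih =>
    have hd := diff_est hR hρ hm hΔ hmM hγ
      (z := z) (n := n) (fwd_closure (fun j => (hγ j).1) hz n)
    have htri : |GPlusN γ (n+1) z - GPlusN γ k z|
        ≤ |GPlusN γ (n+1) z - GPlusN γ n z| + |GPlusN γ n z - GPlusN γ k z| := by
      have := abs_add_le (GPlusN γ (n+1) z - GPlusN γ n z) (GPlusN γ n z - GPlusN γ k z)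
      simpa using this
    have hps : ((1:ℝ)/2) ^ (n+1) = (1/2 : ℝ) ^ n * (1/2) := pow_succ _ _
    calc |GPlusN γ (n+1) z - GPlusN γ k z|
        ≤ CC D Δ m M R * (1/2 : ℝ) ^ n
          + 2 * CC D Δ m M R * ((1/2 : ℝ) ^ k - (1/2 : ℝ) ^ n) := by linarith
      _ = 2 * CC D Δ m M R * ((1/2 : ℝ) ^ k - (1/2 : ℝ) ^ (n+1)) := by rw [hps]; ring

lemma caseB {R : ℝ} (hR : 1 < R) {A : ℝ} (hA0 : 0 ≤ A) {γ : ℤ → HenonMap}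
    (ha : ∀ j : ℤ, ‖(γ j).a‖ ≤ A)
    {z : ℂ × ℂ} (hB : ∀ n : ℕ, fwd γ n z ∉ VPlus R) :
    Tendsto (fun n : ℕ => GPlusN γ n z) atTop (𝓝 0) := by
  set B₀ := max R ‖z‖ with hB₀
  have hB₀R : R ≤ B₀ := le_max_left _ _
  have hB₀0 : 0 < B₀ := lt_of_lt_of_le (by linarith) hB₀R
  have hkey : ∀ n : ℕ, max R (‖(fwd γ n z).1‖) ≤ B₀ + n * A := by
    intro n
    induction n with
    | zero =>
        have hx : ‖z.1‖ ≤ ‖z‖ := by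
          rw [Prod.norm_def]; exact le_max_left _ _
        have : max R (‖(fwd γ 0 z).1‖) ≤ B₀ := by
          show max R (‖z.1‖) ≤ B₀
          exact max_le hB₀R (hx.trans (le_max_right _ _))
        simpa using this
    | succ n ih =>
        have hy : ‖(fwd γ n z).2‖ ≤ max R (‖(fwd γ n z).1‖) :=
          not_lt.mp (hB n)
        have hx1 : (fwd γ (n+1) z).1 = (fwd γ n z).2 + (γ (n : ℤ)).a := rfl
        have h2 : ‖(fwd γ (n+1) z).1‖ ≤ B₀ + n * A + A := by
          rw [hx1]
          calc ‖(fwd γ n z).2 + (γ (n : ℤ)).a‖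
              ≤ ‖(fwd γ n z).2‖ + ‖(γ (n : ℤ)).a‖ :=
                norm_add_le _ _
            _ ≤ B₀ + n * A + A := by
                have := ha (n : ℤ); linarith [hy.trans ih]
        have hcast : ((n:ℝ) + 1) * A = n * A + A := by ring
        refine max_le ?_ ?_
        · push_cast; linarith [mul_nonneg (Nat.cast_nonneg (α := ℝ) n) hA0]
        · push_cast; linarith
  have hnorm : ∀ n : ℕ, ‖fwd γ n z‖ ≤ B₀ + n * A := by
    intro n
    have hy : ‖(fwd γ n z).2‖ ≤ max R (‖(fwd γ n z).1‖) :=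
      not_lt.mp (hB n)
    rw [Prod.norm_def]
    refine max_le ?_ ?_
    · exact (le_max_right R _).trans (hkey n)
    · exact hy.trans (hkey n)
  have hup : ∀ n : ℕ, GPlusN γ n z ≤ (1/2 : ℝ) ^ n * (B₀ + n * A) := by
    intro n
    have hP2 : (2:ℝ) ^ n ≤ _ := prod_deg_ge (γ := γ) n
    have hP0 := prod_deg_pos (γ := γ) n
    have hlp0 : 0 ≤ logPlus ‖fwd γ n z‖ := le_max_right _ _
    have hlp : logPlus ‖fwd γ n z‖ ≤ B₀ + n * A := by
      rw [logPlus]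
      refine max_le (le_trans (Real.log_le_self (norm_nonneg _)) (hnorm n)) ?_
      have : (0:ℝ) ≤ (n:ℝ) * A := mul_nonneg (Nat.cast_nonneg _) hA0
      linarith
    rw [GPlusN]
    have hPinv : (∏ j ∈ Finset.range n, ((γ (j : ℤ)).p.natDegree : ℝ))⁻¹ ≤ (1/2 : ℝ) ^ n := by
      rw [show ((1:ℝ)/2) ^ n = ((2:ℝ) ^ n)⁻¹ by rw [one_div, inv_pow]]
      exact inv_anti₀ (by positivity) hP2
    exact mul_le_mul hPinv hlp hlp0 (by positivity)
  have hlo : ∀ n : ℕ, 0 ≤ GPlusN γ n z := by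
    intro n
    have hP0 := prod_deg_pos (γ := γ) n
    have hlp0 : 0 ≤ logPlus ‖fwd γ n z‖ := le_max_right _ _
    exact mul_nonneg (inv_pos.mpr hP0).le hlp0
  have hcv : Tendsto (fun n : ℕ => (1/2 : ℝ) ^ n * (B₀ + n * A)) atTop (𝓝 0) := by
    have h1 : Tendsto (fun n : ℕ => B₀ * (1/2 : ℝ) ^ n + A * ((n:ℝ) ^ 1 / 2 ^ n)) atTop
        (𝓝 (B₀ * 0 + A * 0)) :=
      ((tendsto_pow_atTop_nhds_zero_of_lt_one (by norm_num) (by norm_num)).const_mul B₀).add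
        ((tendsto_pow_const_div_const_pow_of_one_lt 1 (by norm_num)).const_mul A)
    rw [show B₀ * 0 + A * 0 = 0 by ring] at h1
    refine h1.congr fun n => ?_
    have h2 : ((n:ℝ) ^ 1 / 2 ^ n) = n * (1/2 : ℝ) ^ n := by
      rw [pow_one, div_eq_mul_inv, one_div, inv_pow]
    rw [h2]; ring
  exact tendsto_of_tendsto_of_tendsto_of_le_of_le tendsto_const_nhds hcv hlo hup

lemma fwd_closure' {R ρ : ℝ} {γ : ℤ → HenonMap} (hAγ : ∀ j : ℤ, CondA (γ j) R ρ)
    {z : ℂ × ℂ} {k : ℕ} (hk : fwd γ k z ∈ closure (VPlus R)) :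
    ∀ n, k ≤ n → fwd γ n z ∈ closure (VPlus R) := by
  intro n hn
  induction n, hn using Nat.le_induction with
  | base => exact hk
  | succ n hn ih =>
      show (γ (n : ℤ)).toFun (fwd γ n z) ∈ closure (VPlus R)
      exact subset_closure ((hAγ (n : ℤ)).1 _ ih).1

lemma caseA {R ρ : ℝ} (hR : 1 < R) (hρ : 1 < ρ) {D : ℕ} {Δ m M : ℝ}
    (hm : 0 < m) (hΔ : 0 < Δ) (hmM : m ≤ M)
    {γ : ℤ → HenonMap} (hγ : SeqOK R ρ D Δ m M γ)
    {z : ℂ × ℂ} {k : ℕ} (hk : fwd γ k z ∈ closure (VPlus R)) :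
    ∃ L, Tendsto (fun n : ℕ => GPlusN γ n z) atTop (𝓝 L) := by
  apply cauchySeq_tendsto_of_complete
  rw [← cauchySeq_shift k]
  apply cauchySeq_of_le_geometric (1/2 : ℝ) (2 * CC D Δ m M R) (by norm_num)
  intro n
  have hCC0 : 0 ≤ CC D Δ m M R := (CC_pos D Δ m M R hΔ hm hmM hR).le
  have hcl : fwd γ (n + k) z ∈ closure (VPlus R) :=
    fwd_closure' (fun j => (hγ j).1) hk (n + k) (by omega)
  have hd := diff_est hR hρ hm hΔ hmM hγ (z := z) (n := n + k) hcl
  rw [Real.dist_eq]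
  have hidx : (n + 1) + k = (n + k) + 1 := by omega
  rw [hidx, abs_sub_comm]
  calc |GPlusN γ ((n + k) + 1) z - GPlusN γ (n + k) z|
      ≤ CC D Δ m M R * (1/2 : ℝ) ^ (n + k) := hd
    _ ≤ CC D Δ m M R * (1/2 : ℝ) ^ n := by
        apply mul_le_mul_of_nonneg_left _ hCC0
        exact pow_le_pow_of_le_one (by norm_num) (by norm_num) (by omega)
    _ ≤ 2 * CC D Δ m M R * (1/2 : ℝ) ^ n := by
        have : (0:ℝ) ≤ (1/2 : ℝ) ^ n := by positivity
        nlinarith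

/-- existence of the Green's function `G_γ⁺` as pointwise limit of
`G_{γ,n}⁺`, with uniform convergence on the closure of `V_R⁺`, uniformly in `γ`. -/
theorem stmt_11 (Γ : Set HenonMap) (hne : Γ.Nonempty) (hΓ : ParamBounded Γ)
    (R ρ : ℝ) (hR : 1 < R) (hρ : 1 < ρ) (hA : ∀ h ∈ Γ, CondA h R ρ) :
    ∃ G : (ℤ → HenonMap) → (ℂ × ℂ) → ℝ,
      (∀ γ : ℤ → HenonMap, (∀ j : ℤ, γ j ∈ Γ) → ∀ z : ℂ × ℂ,
        Filter.Tendsto (fun n : ℕ => GPlusN γ n z) Filter.atTop (nhds (G γ z))) ∧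
      (∀ ε : ℝ, 0 < ε → ∃ N : ℕ, ∀ n : ℕ, N ≤ n →
        ∀ γ : ℤ → HenonMap, (∀ j : ℤ, γ j ∈ Γ) →
          ∀ z ∈ closure (VPlus R), |GPlusN γ n z - G γ z| < ε) := by
  classical
  obtain ⟨D, A, d₀, Δ, m, M, hD2, hA0, hd₀, hd₀Δ, hm, hmM, hbd⟩ := hΓ
  have hΔ : 0 < Δ := lt_of_lt_of_le hd₀ hd₀Δ
  set C := CC D Δ m M R with hC
  have hC0 : 0 < C := CC_pos D Δ m M R hΔ hm hmM hR
  -- the candidate limit function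
  refine ⟨fun γ z =>
    if h : ∃ L, Tendsto (fun n : ℕ => GPlusN γ n z) atTop (𝓝 L) then h.choose else 0, ?_, ?_⟩
  case _ =>
    -- pointwise convergence
    intro γ hγmem z
    have hγ : SeqOK R ρ D Δ m M γ := fun j =>
      ⟨hA _ (hγmem j), (hbd _ (hγmem j)).1, (hbd _ (hγmem j)).2.2.2.1,
        (hbd _ (hγmem j)).2.2.2.2.1, (hbd _ (hγmem j)).2.2.2.2.2⟩
    have hex : ∃ L, Tendsto (fun n : ℕ => GPlusN γ n z) atTop (𝓝 L) := by
      by_cases hcase : ∃ k : ℕ, fwd γ k z ∈ closure (VPlus R)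
      · obtain ⟨k, hk⟩ := hcase
        exact caseA hR hρ hm hΔ hmM hγ hk
      · push_neg at hcase
        exact ⟨0, caseB hR hA0 (fun j => (hbd _ (hγmem j)).2.1)
          (fun n hmem => hcase n (subset_closure hmem))⟩
    simp only [dif_pos hex]
    exact hex.choose_spec
  case _ =>
    -- uniform convergence on `closure (VPlus R)`
    intro ε hε
    obtain ⟨N, hN⟩ := exists_pow_lt_of_lt_one (div_pos hε (by linarith : (0:ℝ) < 2 * C + 1))
      (by norm_num : (1/2 : ℝ) < 1)
    refine ⟨N, fun n hn γ hγmem z hz => ?_⟩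
    have hγ : SeqOK R ρ D Δ m M γ := fun j =>
      ⟨hA _ (hγmem j), (hbd _ (hγmem j)).1, (hbd _ (hγmem j)).2.2.2.1,
        (hbd _ (hγmem j)).2.2.2.2.1, (hbd _ (hγmem j)).2.2.2.2.2⟩
    have hex : ∃ L, Tendsto (fun n : ℕ => GPlusN γ n z) atTop (𝓝 L) :=
      caseA hR hρ hm hΔ hmM hγ (k := 0) hz
    simp only [dif_pos hex]
    have hlim : Tendsto (fun n' : ℕ => GPlusN γ n' z) atTop (𝓝 hex.choose) :=
      hex.choose_spec
    -- the quantitative bound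
    have hbound : |GPlusN γ n z - hex.choose| ≤ 2 * C * (1/2 : ℝ) ^ n := by
      have h1 : Tendsto (fun n' : ℕ => |GPlusN γ n z - GPlusN γ n' z|) atTop
          (𝓝 |GPlusN γ n z - hex.choose|) := (tendsto_const_nhds.sub hlim).abs
      refine le_of_tendsto h1 ?_
      filter_upwards [eventually_ge_atTop n] with n' hn'
      have ht := tele_est hR hρ hm hΔ hmM hγ hz n n' hn'
      have hpow : (0:ℝ) ≤ (1/2 : ℝ) ^ n' := by positivity
      rw [abs_sub_comm]
      calc |GPlusN γ n' z - GPlusN γ n z| ≤ 2 * C * ((1/2 : ℝ) ^ n - (1/2 : ℝ) ^ n') := ht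
        _ ≤ 2 * C * (1/2 : ℝ) ^ n := by nlinarith
    have hmono : (1/2 : ℝ) ^ n ≤ (1/2 : ℝ) ^ N :=
      pow_le_pow_of_le_one (by norm_num) (by norm_num) hn
    calc |GPlusN γ n z - hex.choose| ≤ 2 * C * (1/2 : ℝ) ^ n := hbound
      _ ≤ 2 * C * (1/2 : ℝ) ^ N := by nlinarith
      _ < (2 * C + 1) * (ε / (2 * C + 1)) := by
          have h2 : (2 * C) * (1/2 : ℝ) ^ N ≤ (2 * C + 1) * (1/2 : ℝ) ^ N := by
            have : (0:ℝ) ≤ (1/2 : ℝ) ^ N := by positivity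
            nlinarith
          have h3 : (2 * C + 1) * (1/2 : ℝ) ^ N < (2 * C + 1) * (ε / (2 * C + 1)) :=
            mul_lt_mul_of_pos_left hN (by linarith)
          linarith
      _ = ε := by field_simp
end
end

section
/- Let Γ be a nonempty parameter-bounded family of Hénon-form maps, and let R > 1 and ρ > 1 be such that every h ∈ Γ satisfies condition (A) for (R, ρ). For γ ∈ Γ^ℤ let G_γ⁺ be the pointwise limit of G_{γ,n}⁺ on ℂ² (which exists). Then for every A > R, setting C^A := {(x,y) ∈ ℂ² : |x| ≤ A} ∩ closure(D_R ∪ V_R⁻), one has sup over γ ∈ Γ^ℤ and z ∈ C^A of |G_{γ,n}⁺(z) − G_γ⁺(z)| → 0 as n → ∞. In particular, for every compact set E ⊆ ℂ², G_{γ,n}⁺ → G_γ⁺ uniformly on E, uniformly over γ ∈ Γ^ℤ. -/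
set_option maxHeartbeats 1600000


open Complex Filter Set Topology MeasureTheory Bornology

noncomputable section

section Helpers

lemma logPlus_nonneg (t : ℝ) : 0 ≤ logPlus t := le_max_right _ _

lemma logPlus_of_one_le {t : ℝ} (h : 1 ≤ t) : logPlus t = Real.log t :=
  max_eq_left (Real.log_nonneg h)

lemma log_le_logPlus (t : ℝ) : Real.log t ≤ logPlus t := le_max_left _ _

lemma logPlus_le_self {t : ℝ} (h : 0 ≤ t) : logPlus t ≤ t :=
  max_le (Real.log_le_self h) h

lemma logPlus_mono {s t : ℝ} (h0 : 0 ≤ s) (h : s ≤ t) : logPlus s ≤ logPlus t := by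
  rcases le_or_gt s 1 with hs | hs
  · exact max_le (le_trans (Real.log_nonpos h0 hs) (logPlus_nonneg t)) (logPlus_nonneg t)
  · exact max_le (le_trans (Real.log_le_log (by linarith) h) (log_le_logPlus t))
      (logPlus_nonneg t)

lemma poly_abs_le (p : Polynomial ℂ) {M c : ℝ}
    (hcoeff : ∀ i, ‖p.coeff i‖ ≤ M) {y : ℂ} (hc : 1 ≤ c)
    (hy : ‖y‖ ≤ c) :
    ‖p.eval y‖ ≤ ((p.natDegree : ℝ) + 1) * M * c ^ p.natDegree := by
  have hM : 0 ≤ M := le_trans (norm_nonneg _) (hcoeff 0)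
  rw [Polynomial.eval_eq_sum_range]
  calc ‖∑ i ∈ Finset.range (p.natDegree + 1), p.coeff i * y ^ i‖
      ≤ ∑ i ∈ Finset.range (p.natDegree + 1), ‖p.coeff i * y ^ i‖ :=
        norm_sum_le _ _
    _ ≤ ∑ _i ∈ Finset.range (p.natDegree + 1), M * c ^ p.natDegree := by
        apply Finset.sum_le_sum; intro i hi
        rw [norm_mul, norm_pow]
        have h1 : ‖y‖ ^ i ≤ c ^ p.natDegree :=
          le_trans (pow_le_pow_left₀ (norm_nonneg y) hy i)
            (pow_le_pow_right₀ hc (Nat.lt_succ_iff.mp (Finset.mem_range.mp hi)))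
        exact mul_le_mul (hcoeff i) h1 (pow_nonneg (norm_nonneg y) i) hM
    _ = ((p.natDegree : ℝ) + 1) * M * c ^ p.natDegree := by
        rw [Finset.sum_const, Finset.card_range, nsmul_eq_mul]
        push_cast; ring

lemma poly_abs_lower (p : Polynomial ℂ) {M m : ℝ}
    (hcoeff : ∀ i, ‖p.coeff i‖ ≤ M)
    (hm : m ≤ ‖p.leadingCoeff‖) (hd : 1 ≤ p.natDegree)
    {y : ℂ} (hy : 1 ≤ ‖y‖) :
    m * ‖y‖ ^ p.natDegree ≤
      ‖p.eval y‖ + (p.natDegree : ℝ) * M * ‖y‖ ^ (p.natDegree - 1) := by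
  have hM : 0 ≤ M := le_trans (norm_nonneg _) (hcoeff 0)
  have hy0 : 0 ≤ ‖y‖ := norm_nonneg y
  have heval : p.eval y = (∑ i ∈ Finset.range p.natDegree, p.coeff i * y ^ i)
      + p.leadingCoeff * y ^ p.natDegree := by
    rw [Polynomial.eval_eq_sum_range, Finset.sum_range_succ, Polynomial.coeff_natDegree]
  have hsum : ‖∑ i ∈ Finset.range p.natDegree, p.coeff i * y ^ i‖
      ≤ (p.natDegree : ℝ) * M * ‖y‖ ^ (p.natDegree - 1) := by
    calc ‖∑ i ∈ Finset.range p.natDegree, p.coeff i * y ^ i‖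
        ≤ ∑ i ∈ Finset.range p.natDegree, ‖p.coeff i * y ^ i‖ :=
          norm_sum_le _ _
      _ ≤ ∑ _i ∈ Finset.range p.natDegree, M * ‖y‖ ^ (p.natDegree - 1) := by
          apply Finset.sum_le_sum; intro i hi
          rw [norm_mul, norm_pow]
          have hi' : i < p.natDegree := Finset.mem_range.mp hi
          have h1 : ‖y‖ ^ i ≤ ‖y‖ ^ (p.natDegree - 1) :=
            pow_le_pow_right₀ hy (by omega)
          exact mul_le_mul (hcoeff i) h1 (pow_nonneg hy0 i) hM
      _ = (p.natDegree : ℝ) * M * ‖y‖ ^ (p.natDegree - 1) := by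
          rw [Finset.sum_const, Finset.card_range, nsmul_eq_mul]; ring
  have hlead : m * ‖y‖ ^ p.natDegree
      ≤ ‖p.leadingCoeff * y ^ p.natDegree‖ := by
    rw [norm_mul, norm_pow]
    exact mul_le_mul_of_nonneg_right hm (pow_nonneg hy0 _)
  have htri : ‖p.leadingCoeff * y ^ p.natDegree‖
      ≤ ‖p.eval y‖
        + ‖∑ i ∈ Finset.range p.natDegree, p.coeff i * y ^ i‖ := by
    have : p.leadingCoeff * y ^ p.natDegree
        = p.eval y - ∑ i ∈ Finset.range p.natDegree, p.coeff i * y ^ i := by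
      rw [heval]; ring
    rw [this]
    simpa using norm_sub_le (p.eval y)
      (∑ i ∈ Finset.range p.natDegree, p.coeff i * y ^ i)
  linarith

end Helpers

/-- uniform convergence of `G_{γ,n}⁺` to `G_γ⁺` on the sets `C^A`,
uniformly in `γ`; in particular uniform convergence on every compact subset of `ℂ²`. -/
theorem stmt_13 (Γ : Set HenonMap) (hne : Γ.Nonempty) (hΓ : ParamBounded Γ)
    (R ρ : ℝ) (hR : 1 < R) (hρ : 1 < ρ) (hA : ∀ h ∈ Γ, CondA h R ρ)
    (G : (ℤ → HenonMap) → (ℂ × ℂ) → ℝ)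
    (hG : ∀ γ : ℤ → HenonMap, (∀ j : ℤ, γ j ∈ Γ) → ∀ z : ℂ × ℂ,
      Filter.Tendsto (fun n : ℕ => GPlusN γ n z) Filter.atTop (nhds (G γ z))) :
    (∀ A : ℝ, R < A →
      ∀ ε : ℝ, 0 < ε → ∃ N : ℕ, ∀ n : ℕ, N ≤ n →
        ∀ γ : ℤ → HenonMap, (∀ j : ℤ, γ j ∈ Γ) →
          ∀ z ∈ {w : ℂ × ℂ | ‖w.1‖ ≤ A} ∩ closure (DDisk R ∪ VMinus R),
            |GPlusN γ n z - G γ z| < ε) ∧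
    (∀ E : Set (ℂ × ℂ), IsCompact E →
      ∀ ε : ℝ, 0 < ε → ∃ N : ℕ, ∀ n : ℕ, N ≤ n →
        ∀ γ : ℤ → HenonMap, (∀ j : ℤ, γ j ∈ Γ) →
          ∀ z ∈ E, |GPlusN γ n z - G γ z| < ε) := by
  obtain ⟨D, A₀, d₀, Δ, m, M, hD2, hA₀, hd₀, hd₀Δ, hm0, hmM, hpar⟩ := hΓ
  have hM0 : 0 ≤ M := le_trans hm0.le hmM
  have hΔ0 : 0 < Δ := lt_of_lt_of_le hd₀ hd₀Δ
  have master : ∀ S : ℝ, R ≤ S → ∀ ε : ℝ, 0 < ε → ∃ N : ℕ, ∀ n : ℕ, N ≤ n →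
      ∀ γ : ℤ → HenonMap, (∀ j : ℤ, γ j ∈ Γ) →
        ∀ z : ℂ × ℂ, ‖z‖ ≤ S → |GPlusN γ n z - G γ z| < ε := by
    intro S hRS ε hε
    set K : ℝ := ((D : ℝ) + 1) * M + Δ + A₀ + 1 with hKdef
    have hDM : (0:ℝ) ≤ ((D : ℝ) + 1) * M := by positivity
    have hK1 : 1 ≤ K := by simp only [hKdef]; linarith
    have hK0 : 0 < K := lt_of_lt_of_le one_pos hK1
    have hlogK : 0 ≤ Real.log K := Real.log_nonneg hK1
    set R₁ : ℝ := max R (2 * ((D : ℝ) * M + Δ) / m) with hR₁def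
    have hRR₁ : R ≤ R₁ := le_max_left _ _
    have hR₁1 : 1 < R₁ := lt_of_lt_of_le hR hRR₁
    have hlogR₁ : 0 ≤ Real.log R₁ := Real.log_nonneg hR₁1.le
    set C2 : ℝ := Real.log K + |Real.log (m / 2)| + Real.log R₁ with hC2def
    have hC2 : 0 ≤ C2 := by
      simp only [hC2def]
      exact add_nonneg (add_nonneg hlogK (abs_nonneg _)) hlogR₁
    have hS0 : 0 ≤ S := le_trans (by linarith : (0:ℝ) ≤ R) hRS
    set C5 : ℝ := C2 + Real.log K + ((D : ℝ) + 1) * (S + 1) with hC5def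
    set C6 : ℝ := ((D : ℝ) + 1) * A₀ with hC6def
    have hDS : (0:ℝ) ≤ ((D : ℝ) + 1) * (S + 1) := by positivity
    have hC5 : 0 ≤ C5 := by simp only [hC5def]; linarith
    have hC6 : 0 ≤ C6 := by simp only [hC6def]; positivity
    set B : ℕ → ℝ := fun k => (2 * C5 + 2 * C6 * ((k : ℝ) + 1)) * (1/2 : ℝ) ^ k with hBdef
    have hB0 : ∀ k : ℕ, 0 ≤ B k := by
      intro k
      apply mul_nonneg _ (by positivity)
      have : (0:ℝ) ≤ (k : ℝ) + 1 := by positivity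
      nlinarith
    clear_value K R₁ C2 C5 C6 B
    have stepU : ∀ f ∈ Γ, ∀ w : ℂ × ℂ, ‖f.toFun w‖ ≤ K * (‖w‖ + 1) ^ D := by
      intro f hf w
      obtain ⟨hdD, haA, -, hδΔ, hcoeff, -⟩ := hpar f hf
      have hw0 : 0 ≤ ‖w‖ := norm_nonneg w
      have hw1 : (1:ℝ) ≤ ‖w‖ + 1 := by linarith
      have hx : ‖w.1‖ ≤ ‖w‖ := by
        rw [Prod.norm_def]; exact le_max_left _ _
      have hy : ‖w.2‖ ≤ ‖w‖ := by
        rw [Prod.norm_def]; exact le_max_right _ _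
      have hpow1 : (‖w‖ + 1) ≤ (‖w‖ + 1) ^ D := le_self_pow₀ hw1 (by omega)
      have hpow0 : (0:ℝ) ≤ (‖w‖ + 1) ^ D := by positivity
      have hfst : ‖(f.toFun w).1‖ ≤ K * (‖w‖ + 1) ^ D := by
        have h1 : ‖w.2 + f.a‖ ≤ ‖w‖ + A₀ := by
          calc ‖w.2 + f.a‖ ≤ ‖w.2‖ + ‖f.a‖ :=
                norm_add_le _ _
            _ ≤ ‖w‖ + A₀ := add_le_add hy haA
        have h2 : ‖w‖ + A₀ ≤ K * (‖w‖ + 1) := by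
          simp only [hKdef]; nlinarith
        have h3 : K * (‖w‖ + 1) ≤ K * (‖w‖ + 1) ^ D :=
          mul_le_mul_of_nonneg_left hpow1 hK0.le
        exact le_trans h1 (le_trans h2 h3)
      have hsnd : ‖(f.toFun w).2‖ ≤ K * (‖w‖ + 1) ^ D := by
        have hyc : ‖w.2‖ ≤ ‖w‖ + 1 := by linarith
        have hev : ‖f.p.eval w.2‖
            ≤ ((f.p.natDegree : ℝ) + 1) * M * (‖w‖ + 1) ^ f.p.natDegree :=
          poly_abs_le f.p hcoeff hw1 hyc
        have hd1 : ((f.p.natDegree : ℝ) + 1) ≤ (D : ℝ) + 1 := by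
          have : (f.p.natDegree : ℝ) ≤ (D : ℝ) := Nat.cast_le.mpr hdD
          linarith
        have hpdD : (‖w‖ + 1) ^ f.p.natDegree ≤ (‖w‖ + 1) ^ D := pow_le_pow_right₀ hw1 hdD
        have hev2 : ‖f.p.eval w.2‖ ≤ ((D : ℝ) + 1) * M * (‖w‖ + 1) ^ D := by
          calc ‖f.p.eval w.2‖
              ≤ ((f.p.natDegree : ℝ) + 1) * M * (‖w‖ + 1) ^ f.p.natDegree := hev
            _ ≤ ((D : ℝ) + 1) * M * (‖w‖ + 1) ^ D :=
                mul_le_mul (mul_le_mul_of_nonneg_right hd1 hM0) hpdD (by positivity)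
                  (by positivity)
        have hδx : ‖f.δ * w.1‖ ≤ Δ * (‖w‖ + 1) ^ D := by
          rw [norm_mul]
          calc ‖f.δ‖ * ‖w.1‖ ≤ Δ * (‖w‖ + 1) :=
                mul_le_mul hδΔ (by linarith) (norm_nonneg _) hΔ0.le
            _ ≤ Δ * (‖w‖ + 1) ^ D := mul_le_mul_of_nonneg_left hpow1 hΔ0.le
        have htri : ‖f.p.eval w.2 - f.δ * w.1‖
            ≤ ‖f.p.eval w.2‖ + ‖f.δ * w.1‖ := by
          simpa using norm_sub_le (f.p.eval w.2) (f.δ * w.1)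
        have hKge : ((D : ℝ) + 1) * M + Δ ≤ K := by simp only [hKdef]; linarith
        calc ‖(f.toFun w).2‖
            = ‖f.p.eval w.2 - f.δ * w.1‖ := rfl
          _ ≤ ((D : ℝ) + 1) * M * (‖w‖ + 1) ^ D + Δ * (‖w‖ + 1) ^ D := by linarith
          _ = (((D : ℝ) + 1) * M + Δ) * (‖w‖ + 1) ^ D := by ring
          _ ≤ K * (‖w‖ + 1) ^ D := mul_le_mul_of_nonneg_right hKge hpow0
      rw [Prod.norm_def]
      exact max_le (by exact hfst)
        (by exact hsnd)
    have stepV : ∀ f ∈ Γ, ∀ w : ℂ × ℂ, w ∈ VPlus R →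
        f.toFun w ∈ VPlus R ∧
        |((f.p.natDegree : ℝ))⁻¹ * logPlus ‖f.toFun w‖ - logPlus ‖w‖| ≤ C2 := by
      intro f hf w hw
      obtain ⟨hfV, hgrow⟩ := (hA f hf).1 w (subset_closure hw)
      refine ⟨hfV, ?_⟩
      obtain ⟨hdD, haA, -, hδΔ, hcoeff, hlead⟩ := hpar f hf
      set d := f.p.natDegree with hddef
      have hd2 : 2 ≤ d := f.hdeg
      have hd0 : (0:ℝ) < (d : ℝ) := by
        have : 0 < d := by omega
        exact_mod_cast this
      have hdinv0 : (0:ℝ) ≤ ((d : ℝ))⁻¹ := by positivity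
      have hd1' : (1:ℝ) ≤ (d : ℝ) := by
        have : 1 ≤ d := by omega
        exact_mod_cast this
      have hdinv1 : ((d : ℝ))⁻¹ ≤ 1 := inv_le_one_of_one_le₀ hd1'
      have hwV : max R (‖w.1‖) < ‖w.2‖ := hw
      have hyR : R < ‖w.2‖ := lt_of_le_of_lt (le_max_left _ _) hwV
      have hy1 : 1 < ‖w.2‖ := lt_trans hR hyR
      have hxy : ‖w.1‖ ≤ ‖w.2‖ :=
        le_of_lt (lt_of_le_of_lt (le_max_right _ _) hwV)
      have hnw : ‖w‖ = ‖w.2‖ := by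
        rw [Prod.norm_def]
        exact max_eq_right hxy
      have hfV' : max R (‖(f.toFun w).1‖) < ‖(f.toFun w).2‖ := hfV
      have htR : R < ‖(f.toFun w).2‖ := lt_of_le_of_lt (le_max_left _ _) hfV'
      have ht1 : 1 < ‖(f.toFun w).2‖ := lt_trans hR htR
      have hnfw : ‖f.toFun w‖ = ‖(f.toFun w).2‖ := by
        rw [Prod.norm_def]
        exact max_eq_right (le_of_lt (lt_of_le_of_lt (le_max_right _ _) hfV'))
      rw [hnw, hnfw, logPlus_of_one_le hy1.le, logPlus_of_one_le ht1.le]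
      set Y := ‖w.2‖ with hYdef
      set T := ‖(f.toFun w).2‖ with hTdef
      have hT0 : (0:ℝ) < T := by linarith
      have hY0 : (0:ℝ) < Y := by linarith
      have hYd0 : (0:ℝ) ≤ Y ^ d := by positivity
      have hYd1 : (0:ℝ) ≤ Y ^ (d - 1) := by positivity
      have habsT : T = ‖f.p.eval w.2 - f.δ * w.1‖ := rfl
      have hδxbase : ‖f.δ * w.1‖ ≤ Δ * Y := by
        rw [norm_mul]
        exact mul_le_mul hδΔ hxy (norm_nonneg _) hΔ0.le
      have ht_up : T ≤ K * Y ^ d := by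
        have hev : ‖f.p.eval w.2‖ ≤ ((d : ℝ) + 1) * M * Y ^ d :=
          poly_abs_le f.p hcoeff hy1.le le_rfl
        have hYY : Y ≤ Y ^ d := le_self_pow₀ hy1.le (by omega)
        have hδx : ‖f.δ * w.1‖ ≤ Δ * Y ^ d :=
          le_trans hδxbase (mul_le_mul_of_nonneg_left hYY hΔ0.le)
        have htri : T ≤ ‖f.p.eval w.2‖ + ‖f.δ * w.1‖ := by
          rw [habsT]
          simpa using norm_sub_le (f.p.eval w.2) (f.δ * w.1)
        have hdD' : ((d : ℝ) + 1) ≤ (D : ℝ) + 1 := by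
          have : (d : ℝ) ≤ (D : ℝ) := Nat.cast_le.mpr hdD
          linarith
        have hstep1 : ((d : ℝ) + 1) * M * Y ^ d ≤ ((D : ℝ) + 1) * M * Y ^ d :=
          mul_le_mul_of_nonneg_right (mul_le_mul_of_nonneg_right hdD' hM0) hYd0
        have hKge : ((D : ℝ) + 1) * M + Δ ≤ K := by simp only [hKdef]; linarith
        have hstep2 : (((D : ℝ) + 1) * M + Δ) * Y ^ d ≤ K * Y ^ d :=
          mul_le_mul_of_nonneg_right hKge hYd0
        linarith
      have hlogT_up : Real.log T ≤ Real.log K + (d : ℝ) * Real.log Y := by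
        calc Real.log T ≤ Real.log (K * Y ^ d) := Real.log_le_log hT0 ht_up
          _ = Real.log K + (d : ℝ) * Real.log Y := by
              rw [Real.log_mul (ne_of_gt hK0) (by positivity), Real.log_pow]
      have hlogY0 : 0 ≤ Real.log Y := Real.log_nonneg hy1.le
      have hlogT0 : 0 ≤ Real.log T := Real.log_nonneg ht1.le
      rw [abs_le]
      constructor
      · rcases le_or_gt R₁ Y with hcase | hcase
        · have hRsplit : 2 * ((D : ℝ) * M + Δ) / m ≤ R₁ := by
            rw [hR₁def]; exact le_max_right _ _
          have hY2 : 2 * ((D : ℝ) * M + Δ) / m ≤ Y := le_trans hRsplit hcase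
          have hmY : 2 * ((D : ℝ) * M + Δ) ≤ m * Y := by
            rw [div_le_iff₀ hm0] at hY2; linarith
          have hlow : m * Y ^ d ≤ ‖f.p.eval w.2‖ + (d : ℝ) * M * Y ^ (d - 1) :=
            poly_abs_lower f.p hcoeff hlead (by omega) hy1.le
          have hsub : ‖f.p.eval w.2‖ - ‖f.δ * w.1‖ ≤ T := by
            rw [habsT]
            simpa using norm_sub_norm_le (f.p.eval w.2) (f.δ * w.1)
          have hYY1 : Y ≤ Y ^ (d - 1) := le_self_pow₀ hy1.le (by omega)
          have hδx : ‖f.δ * w.1‖ ≤ Δ * Y ^ (d - 1) :=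
            le_trans hδxbase (mul_le_mul_of_nonneg_left hYY1 hΔ0.le)
          have hdM : (d : ℝ) * M * Y ^ (d - 1) ≤ (D : ℝ) * M * Y ^ (d - 1) :=
            mul_le_mul_of_nonneg_right
              (mul_le_mul_of_nonneg_right (Nat.cast_le.mpr hdD) hM0) hYd1
          have hYsplit : Y ^ d = Y ^ (d - 1) * Y := by
            rw [← pow_succ]; congr 1; omega
          have hkey : ((D : ℝ) * M + Δ) * Y ^ (d - 1) ≤ (m / 2) * Y ^ d := by
            have h1 : (D : ℝ) * M + Δ ≤ (m / 2) * Y := by linarith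
            have h2 := mul_le_mul_of_nonneg_right h1 hYd1
            rw [hYsplit]
            linarith
          have ht_lo : (m / 2) * Y ^ d ≤ T := by linarith
          have hm2 : (0:ℝ) < m / 2 := by linarith
          have hlog_lo : Real.log (m / 2) + (d : ℝ) * Real.log Y ≤ Real.log T := by
            calc Real.log (m / 2) + (d : ℝ) * Real.log Y = Real.log ((m / 2) * Y ^ d) := by
                  rw [Real.log_mul (ne_of_gt hm2) (by positivity), Real.log_pow]
              _ ≤ Real.log T := Real.log_le_log (by positivity) ht_lo
          have h1 : (d : ℝ)⁻¹ * (Real.log (m / 2) + (d : ℝ) * Real.log Y)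
              ≤ (d : ℝ)⁻¹ * Real.log T :=
            mul_le_mul_of_nonneg_left hlog_lo hdinv0
          have h2 : (d : ℝ)⁻¹ * (Real.log (m / 2) + (d : ℝ) * Real.log Y)
              = (d : ℝ)⁻¹ * Real.log (m / 2) + Real.log Y := by
            field_simp
          have h3 : -|Real.log (m / 2)| ≤ (d : ℝ)⁻¹ * Real.log (m / 2) := by
            rcases le_or_gt 0 (Real.log (m / 2)) with h | h
            · exact le_trans (neg_nonpos.mpr (abs_nonneg _)) (mul_nonneg hdinv0 h)
            · rw [abs_of_neg h]
              have h4 := mul_le_mul_of_nonneg_right hdinv1 (neg_nonneg.mpr h.le)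
              linarith
          simp only [hC2def]
          linarith
        · have hTY : Y ≤ T := by
            have h0 := mul_le_mul_of_nonneg_right hρ.le hY0.le
            linarith
          have h1 : 0 ≤ (d : ℝ)⁻¹ * Real.log T := mul_nonneg hdinv0 hlogT0
          have h2 : Real.log Y ≤ Real.log R₁ := Real.log_le_log hY0 hcase.le
          simp only [hC2def]
          linarith [abs_nonneg (Real.log (m / 2))]
      · have h1 : (d : ℝ)⁻¹ * Real.log T ≤ (d : ℝ)⁻¹ * (Real.log K + (d : ℝ) * Real.log Y) :=
          mul_le_mul_of_nonneg_left hlogT_up hdinv0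
        have h2 : (d : ℝ)⁻¹ * (Real.log K + (d : ℝ) * Real.log Y)
            = (d : ℝ)⁻¹ * Real.log K + Real.log Y := by field_simp
        have h3 : (d : ℝ)⁻¹ * Real.log K ≤ Real.log K :=
          mul_le_of_le_one_left hlogK hdinv1
        simp only [hC2def]
        linarith [abs_nonneg (Real.log (m / 2))]
    have key : ∀ γ : ℤ → HenonMap, (∀ j : ℤ, γ j ∈ Γ) → ∀ z : ℂ × ℂ, ‖z‖ ≤ S →
        ∀ n : ℕ, |GPlusN γ n z - G γ z| ≤ B n := by
      intro γ hγ z hz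
      have hD0 : (0:ℝ) ≤ (D : ℝ) := Nat.cast_nonneg D
      have inv : ∀ n : ℕ, fwd γ n z ∈ VPlus R → fwd γ (n + 1) z ∈ VPlus R := by
        intro n h
        exact ((hA _ (hγ (n : ℤ))).1 _ (subset_closure h)).1
      have grow : ∀ n : ℕ, fwd γ n z ∉ VPlus R → ‖fwd γ n z‖ ≤ S + n * A₀ := by
        intro n
        induction n with
        | zero => intro _; simpa [fwd] using hz
        | succ n ih =>
          intro hn1
          push_cast
          have hn : fwd γ n z ∉ VPlus R := fun h => hn1 (inv n h)
          have h1 := ih hn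
          obtain ⟨-, haA, -, -, -, -⟩ := hpar _ (hγ (n : ℤ))
          have hy : ‖(fwd γ n z).2‖ ≤ ‖fwd γ n z‖ := by
            rw [Prod.norm_def]; exact le_max_right _ _
          have hfst : ‖(fwd γ (n + 1) z).1‖ ≤ S + ((n : ℝ) + 1) * A₀ := by
            have heq : (fwd γ (n + 1) z).1 = (fwd γ n z).2 + (γ (n : ℤ)).a := rfl
            rw [heq]
            calc ‖(fwd γ n z).2 + (γ (n : ℤ)).a‖
                ≤ ‖(fwd γ n z).2‖ + ‖(γ (n : ℤ)).a‖ :=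
                  norm_add_le _ _
              _ ≤ S + n * A₀ + A₀ := add_le_add (le_trans hy h1) haA
              _ = S + ((n : ℝ) + 1) * A₀ := by ring
          have hsnd : ‖(fwd γ (n + 1) z).2‖
              ≤ max R (‖(fwd γ (n + 1) z).1‖) := by
            have h2 := hn1
            simp only [VPlus, Set.mem_setOf_eq, not_lt] at h2
            exact h2
          have hRS' : R ≤ S + ((n : ℝ) + 1) * A₀ := by
            have h3 : (0:ℝ) ≤ ((n:ℝ) + 1) * A₀ := by positivity
            linarith
          rw [Prod.norm_def]
          apply max_le
          · exact hfst
          · exact le_trans hsnd (max_le hRS' hfst)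
      have step : ∀ n : ℕ,
          |GPlusN γ (n + 1) z - GPlusN γ n z| ≤ (C5 + C6 * n) * (1/2 : ℝ) ^ n := by
        intro n
        have hd2 : 2 ≤ (γ (n : ℤ)).p.natDegree := (γ (n : ℤ)).hdeg
        have hd1' : (1:ℝ) ≤ ((γ (n : ℤ)).p.natDegree : ℝ) := by
          have h0 : 1 ≤ (γ (n : ℤ)).p.natDegree := by omega
          exact_mod_cast h0
        have hdinv0 : (0:ℝ) ≤ (((γ (n : ℤ)).p.natDegree : ℝ))⁻¹ := by positivity
        have hdinv1 : (((γ (n : ℤ)).p.natDegree : ℝ))⁻¹ ≤ 1 := inv_le_one_of_one_le₀ hd1'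
        have hP_pos : 0 < ∏ j ∈ Finset.range n, ((γ (j : ℤ)).p.natDegree : ℝ) := by
          apply Finset.prod_pos
          intro j _
          have h0 : 0 < (γ (j : ℤ)).p.natDegree := by have := (γ (j : ℤ)).hdeg; omega
          exact_mod_cast h0
        have hP_ge : (2:ℝ) ^ n ≤ ∏ j ∈ Finset.range n, ((γ (j : ℤ)).p.natDegree : ℝ) := by
          have h0 : (2:ℝ) ^ n = ∏ _j ∈ Finset.range n, (2:ℝ) := by
            rw [Finset.prod_const, Finset.card_range]
          rw [h0]
          apply Finset.prod_le_prod
          · intro j _; norm_num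
          · intro j _
            have := (γ (j : ℤ)).hdeg
            exact_mod_cast this
        have hsplit : GPlusN γ (n + 1) z - GPlusN γ n z
            = (∏ j ∈ Finset.range n, ((γ (j : ℤ)).p.natDegree : ℝ))⁻¹ *
              ((((γ (n : ℤ)).p.natDegree : ℝ))⁻¹ * logPlus ‖fwd γ (n + 1) z‖
                - logPlus ‖fwd γ n z‖) := by
          rw [GPlusN, GPlusN, Finset.prod_range_succ, mul_inv]
          ring
        rw [hsplit, abs_mul, abs_inv,
          abs_of_pos hP_pos]
        have hψ : |(((γ (n : ℤ)).p.natDegree : ℝ))⁻¹ * logPlus ‖fwd γ (n + 1) z‖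
            - logPlus ‖fwd γ n z‖| ≤ C5 + C6 * n := by
          by_cases hV : fwd γ n z ∈ VPlus R
          · have h := (stepV _ (hγ (n : ℤ)) _ hV).2
            have heq : fwd γ (n + 1) z = ((γ (n : ℤ)).toFun (fwd γ n z)) := rfl
            rw [heq]
            refine le_trans h ?_
            have h6 : (0:ℝ) ≤ C6 * n := by
              have : (0:ℝ) ≤ (n : ℝ) := Nat.cast_nonneg n
              exact mul_nonneg hC6 this
            simp only [hC5def]
            linarith
          · have hwn := grow n hV
            have hwn0 : (0:ℝ) ≤ ‖fwd γ n z‖ := norm_nonneg _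
            have hL : logPlus ‖fwd γ n z‖ ≤ S + n * A₀ := le_trans (logPlus_le_self hwn0) hwn
            have hL0 : 0 ≤ logPlus ‖fwd γ n z‖ := logPlus_nonneg _
            have hU : ‖fwd γ (n + 1) z‖ ≤ K * (‖fwd γ n z‖ + 1) ^ D := stepU _ (hγ (n : ℤ)) _
            have hc1 : (1:ℝ) ≤ ‖fwd γ n z‖ + 1 := by linarith
            have hpow1 : (1:ℝ) ≤ (‖fwd γ n z‖ + 1) ^ D := one_le_pow₀ hc1
            have hKc : (1:ℝ) ≤ K * (‖fwd γ n z‖ + 1) ^ D := by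
              calc (1:ℝ) = 1 * 1 := by norm_num
                _ ≤ K * (‖fwd γ n z‖ + 1) ^ D :=
                    mul_le_mul hK1 hpow1 zero_le_one (by linarith)
            have hL' : logPlus ‖fwd γ (n + 1) z‖
                ≤ Real.log K + (D : ℝ) * (‖fwd γ n z‖ + 1) := by
              have hlogc : Real.log (‖fwd γ n z‖ + 1) ≤ ‖fwd γ n z‖ + 1 :=
                Real.log_le_self (by linarith)
              have hmul : (D : ℝ) * Real.log (‖fwd γ n z‖ + 1) ≤ (D : ℝ) * (‖fwd γ n z‖ + 1) :=
                mul_le_mul_of_nonneg_left hlogc hD0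
              calc logPlus ‖fwd γ (n + 1) z‖ ≤ logPlus (K * (‖fwd γ n z‖ + 1) ^ D) :=
                    logPlus_mono (norm_nonneg _) hU
                _ = Real.log (K * (‖fwd γ n z‖ + 1) ^ D) := logPlus_of_one_le hKc
                _ = Real.log K + (D : ℝ) * Real.log (‖fwd γ n z‖ + 1) := by
                    rw [Real.log_mul (ne_of_gt hK0) (by positivity), Real.log_pow]
                _ ≤ Real.log K + (D : ℝ) * (‖fwd γ n z‖ + 1) := by linarith
            have hL'0 : 0 ≤ logPlus ‖fwd γ (n + 1) z‖ := logPlus_nonneg _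
            have hdL : (((γ (n : ℤ)).p.natDegree : ℝ))⁻¹ * logPlus ‖fwd γ (n + 1) z‖
                ≤ logPlus ‖fwd γ (n + 1) z‖ := mul_le_of_le_one_left hL'0 hdinv1
            have hdL0 : 0 ≤ (((γ (n : ℤ)).p.natDegree : ℝ))⁻¹ * logPlus ‖fwd γ (n + 1) z‖ :=
              mul_nonneg hdinv0 hL'0
            have hmono : (D : ℝ) * (‖fwd γ n z‖ + 1) ≤ (D : ℝ) * (S + n * A₀ + 1) :=
              mul_le_mul_of_nonneg_left (by linarith) hD0
            have hn0 : (0:ℝ) ≤ (n : ℝ) := Nat.cast_nonneg n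
            have hDAn : (0:ℝ) ≤ (D : ℝ) * A₀ * (n : ℝ) :=
              mul_nonneg (mul_nonneg hD0 hA₀) hn0
            have hAn : (0:ℝ) ≤ A₀ * (n : ℝ) := mul_nonneg hA₀ hn0
            have hDS' : (0:ℝ) ≤ (D : ℝ) * S := mul_nonneg hD0 hS0
            rw [abs_le]
            constructor
            · simp only [hC5def, hC6def]
              linarith only [hL, hdL0, hC2, hlogK, hDAn, hAn, hDS', hD0]
            · simp only [hC5def, hC6def]
              linarith only [hdL, hL', hmono, hL0, hC2, hAn, hS0, hDAn]
        calc (∏ j ∈ Finset.range n, ((γ (j : ℤ)).p.natDegree : ℝ))⁻¹ *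
              |(((γ (n : ℤ)).p.natDegree : ℝ))⁻¹ * logPlus ‖fwd γ (n + 1) z‖
                - logPlus ‖fwd γ n z‖|
            ≤ ((2:ℝ) ^ n)⁻¹ * (C5 + C6 * n) := by
              apply mul_le_mul
              · exact inv_anti₀ (by positivity) hP_ge
              · exact hψ
              · exact abs_nonneg _
              · positivity
          _ = (C5 + C6 * n) * (1/2 : ℝ) ^ n := by
              rw [one_div, inv_pow]
              ring
      have hBdiff : ∀ k : ℕ, (C5 + C6 * k) * (1/2 : ℝ) ^ k = B k - B (k + 1) := by
        intro k
        simp only [hBdef]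
        rw [pow_succ]
        push_cast
        ring
      have cauchy : ∀ n M' : ℕ, n ≤ M' → |GPlusN γ n z - GPlusN γ M' z| ≤ B n - B M' := by
        intro n M' h
        induction M', h using Nat.le_induction with
        | base => simp
        | succ M' hM ih =>
          calc |GPlusN γ n z - GPlusN γ (M' + 1) z|
              ≤ |GPlusN γ n z - GPlusN γ M' z|
                + |GPlusN γ (M' + 1) z - GPlusN γ M' z| := by
                have h4 := abs_sub_le (GPlusN γ n z) (GPlusN γ M' z) (GPlusN γ (M' + 1) z)
                have h5 := abs_sub_comm (GPlusN γ M' z) (GPlusN γ (M' + 1) z)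
                linarith
            _ ≤ (B n - B M') + (C5 + C6 * M') * (1/2 : ℝ) ^ M' := add_le_add ih (step M')
            _ = B n - B (M' + 1) := by rw [hBdiff M']; ring
      intro n
      have hlim := hG γ hγ z
      have htend : Tendsto (fun M' : ℕ => |GPlusN γ n z - GPlusN γ M' z|) atTop
          (𝓝 |GPlusN γ n z - G γ z|) := (tendsto_const_nhds.sub hlim).abs
      apply le_of_tendsto htend
      filter_upwards [eventually_ge_atTop n] with M' hM'
      have h6 := cauchy n M' hM'
      linarith [hB0 M']
    have hBtend : Tendsto B atTop (𝓝 0) := by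
      have h1 : Tendsto (fun n : ℕ => (2 * C5 + 2 * C6) * (1/2 : ℝ) ^ n) atTop (𝓝 0) := by
        simpa using (tendsto_pow_atTop_nhds_zero_of_lt_one (by norm_num : (0:ℝ) ≤ 1/2)
          (by norm_num : (1/2 : ℝ) < 1)).const_mul (2 * C5 + 2 * C6)
      have h2 : Tendsto (fun n : ℕ => (2 * C6) * ((n : ℝ) * (1/2 : ℝ) ^ n)) atTop (𝓝 0) := by
        simpa using (tendsto_self_mul_const_pow_of_lt_one (by norm_num : (0:ℝ) ≤ 1/2)
          (by norm_num : (1/2 : ℝ) < 1)).const_mul (2 * C6)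
      have heq : B = fun n : ℕ => (2 * C5 + 2 * C6) * (1/2 : ℝ) ^ n
          + (2 * C6) * ((n : ℝ) * (1/2 : ℝ) ^ n) := by
        funext n; simp only [hBdef]; ring
      rw [heq]
      simpa using h1.add h2
    have hev : ∀ᶠ n in atTop, B n < ε := hBtend.eventually (gt_mem_nhds hε)
    obtain ⟨N, hN⟩ := eventually_atTop.mp hev
    exact ⟨N, fun n hn γ hγ z hz => lt_of_le_of_lt (key γ hγ z hz n) (hN n hn)⟩
  constructor
  · intro A hRA ε hε
    obtain ⟨N, hN⟩ := master A hRA.le ε hε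
    refine ⟨N, fun n hn γ hγ z hzmem => ?_⟩
    obtain ⟨hz1, hz2⟩ := hzmem
    have hz1' : ‖z.1‖ ≤ A := hz1
    have hcl : ‖z.2‖ ≤ max R (‖z.1‖) := by
      have hsub : closure (DDisk R ∪ VMinus R)
          ⊆ {w : ℂ × ℂ | ‖w.2‖ ≤ max R (‖w.1‖)} := by
        apply closure_minimal
        · rintro w (hw | hw)
          · have hw' : max (‖w.1‖) (‖w.2‖) < R := hw
            exact le_trans (le_of_lt (lt_of_le_of_lt (le_max_right _ _) hw')) (le_max_left _ _)
          · have hw' : max R (‖w.2‖) < ‖w.1‖ := hw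
            exact le_trans (le_of_lt (lt_of_le_of_lt (le_max_right _ _) hw')) (le_max_right _ _)
        · exact isClosed_le (continuous_norm.comp continuous_snd)
            (continuous_const.max (continuous_norm.comp continuous_fst))
      exact hsub hz2
    have hz' : ‖z‖ ≤ A := by
      rw [Prod.norm_def]
      apply max_le
      · exact hz1'
      · exact hcl.trans (max_le hRA.le hz1')
    exact hN n hn γ hγ z hz'
  · intro E hE ε hε
    obtain ⟨S₀, hS₀⟩ := isBounded_iff_forall_norm_le.mp hE.isBounded
    obtain ⟨N, hN⟩ := master (max R S₀) (le_max_left _ _) ε hε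
    exact ⟨N, fun n hn γ hγ z hzE =>
      hN n hn γ hγ z ((hS₀ z hzE).trans (le_max_right _ _))⟩
end
end

section
/- Let Γ be a nonempty parameter-bounded family of Hénon-form maps. Then there exists R₀ > 0 such that for every γ ∈ Γ^ℤ, the set K_γ := K_γ⁺ ∩ K_γ⁻ is a nonempty compact subset of ℂ² contained in the closure of D_{R₀}. -/
open Complex Filter Set Topology MeasureTheory Bornology

noncomputable section

/-! ### Auxiliary lemmas -/

namespace HenonMap

lemma invFun_toFun' (f : HenonMap) (z : ℂ × ℂ) : f.invFun (f.toFun z) = z := by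
  have hδ := f.hδ
  simp only [toFun, invFun, add_sub_cancel_right]
  ext
  · simp; field_simp
  · simp

lemma toFun_invFun' (f : HenonMap) (z : ℂ × ℂ) : f.toFun (f.invFun z) = z := by
  have hδ := f.hδ
  simp only [toFun, invFun, sub_add_cancel]
  ext <;> simp
  field_simp
  ring

lemma toFun_inj (f : HenonMap) : Function.Injective f.toFun := by
  intro a b h
  have := congrArg f.invFun h
  rwa [invFun_toFun', invFun_toFun'] at this

lemma continuous_toFun (f : HenonMap) : Continuous f.toFun := by
  unfold toFun
  exact (continuous_snd.add continuous_const).prodMk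
    ((f.p.continuous.comp continuous_snd).sub (continuous_const.mul continuous_fst))

lemma continuous_invFun (f : HenonMap) : Continuous f.invFun := by
  unfold invFun
  exact (continuous_const.mul ((f.p.continuous.comp (continuous_fst.sub continuous_const)).sub
    continuous_snd)).prodMk (continuous_fst.sub continuous_const)

end HenonMap

lemma poly_lower (p : Polynomial ℂ) (m M : ℝ) (D : ℕ) (hd2 : 2 ≤ p.natDegree)
    (hdD : p.natDegree ≤ D) (hc : ∀ i, ‖p.coeff i‖ ≤ M)
    (hm : m ≤ ‖p.leadingCoeff‖) (hm0 : 0 < m)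
    (w : ℂ) (ht : 1 ≤ ‖w‖) (hpos : 0 ≤ m * ‖w‖ - M * D) :
    ‖w‖ * (m * ‖w‖ - M * D) ≤ ‖p.eval w‖ := by
  have hmm := hm0
  set t := ‖w‖ with htdef
  set d := p.natDegree with hddef
  have hM0 : 0 ≤ M := le_trans (norm_nonneg _) (hc 0)
  have ht0 : 0 < t := lt_of_lt_of_le one_pos ht
  have h1 : p.eval w = p.coeff d * w ^ d + ∑ i ∈ Finset.range d, p.coeff i * w ^ i := by
    rw [p.eval_eq_sum_range, Finset.sum_range_succ, add_comm]
  have hsum : ‖∑ i ∈ Finset.range d, p.coeff i * w ^ i‖ ≤ (d : ℝ) * (M * t ^ (d - 1)) := by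
    calc ‖∑ i ∈ Finset.range d, p.coeff i * w ^ i‖
        ≤ ∑ i ∈ Finset.range d, ‖p.coeff i * w ^ i‖ := norm_sum_le _ _
      _ ≤ ∑ _i ∈ Finset.range d, M * t ^ (d - 1) := by
          apply Finset.sum_le_sum
          intro i hi
          rw [norm_mul, norm_pow]
          have h1 : ‖p.coeff i‖ ≤ M := hc i
          have h2 : t ^ i ≤ t ^ (d - 1) :=
            pow_le_pow_right₀ ht (by have := Finset.mem_range.mp hi; omega)
          exact mul_le_mul h1 h2 (pow_nonneg (le_of_lt ht0) _) hM0
      _ = (d : ℝ) * (M * t ^ (d - 1)) := by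
          rw [Finset.sum_const, Finset.card_range, nsmul_eq_mul]
  have hlead : m * t ^ d ≤ ‖p.coeff d * w ^ d‖ := by
    rw [norm_mul, norm_pow]
    exact mul_le_mul hm le_rfl (pow_nonneg (le_of_lt ht0) _) (norm_nonneg _)
  have hmain : m * t ^ d - (d : ℝ) * (M * t ^ (d - 1)) ≤ ‖p.eval w‖ := by
    rw [h1]
    have h3 : ‖p.coeff d * w ^ d‖ ≤
        ‖p.coeff d * w ^ d + ∑ i ∈ Finset.range d, p.coeff i * w ^ i‖
          + ‖∑ i ∈ Finset.range d, p.coeff i * w ^ i‖ := by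
      have h4 := norm_add_le
        (p.coeff d * w ^ d + ∑ i ∈ Finset.range d, p.coeff i * w ^ i)
        (-(∑ i ∈ Finset.range d, p.coeff i * w ^ i))
      simpa using h4
    linarith
  have hd1 : d = (d - 1) + 1 := by omega
  have hpow : t ^ d = t ^ (d - 1) * t := by conv_lhs => rw [hd1, pow_succ]
  have hfac : m * t ^ d - (d : ℝ) * (M * t ^ (d - 1)) = t ^ (d - 1) * (m * t - (d : ℝ) * M) := by
    rw [hpow]; ring
  have hdd : (d : ℝ) ≤ (D : ℝ) := by exact_mod_cast hdD
  have h5 : m * t - (d : ℝ) * M ≥ m * t - M * (D : ℝ) := by nlinarith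
  have h6 : t ≤ t ^ (d - 1) := by
    calc t = t ^ 1 := (pow_one t).symm
    _ ≤ t ^ (d - 1) := pow_le_pow_right₀ ht (by omega)
  calc t * (m * t - M * (D : ℝ)) ≤ t ^ (d - 1) * (m * t - (d : ℝ) * M) := by nlinarith
    _ = m * t ^ d - (d : ℝ) * (M * t ^ (d - 1)) := hfac.symm
    _ ≤ ‖p.eval w‖ := hmain

lemma key_plus (D : ℕ) (A Δ m M R : ℝ) (hm0 : 0 < m) (hA0 : 0 ≤ A) (hΔ0 : 0 < Δ)
    (hR : R = 2 + 2 * A + (2 * M * D + 16 * Δ + 16) / m)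
    (f : HenonMap) (hfD : f.p.natDegree ≤ D) (hfa : ‖f.a‖ ≤ A)
    (hfδ : ‖f.δ‖ ≤ Δ) (hfc : ∀ i, ‖f.p.coeff i‖ ≤ M)
    (hfm : m ≤ ‖f.p.leadingCoeff‖)
    (z : ℂ × ℂ) (h1 : R ≤ ‖z.2‖) (h2 : ‖z.1‖ ≤ ‖z.2‖) :
    f.toFun z ∈ VPlus R ∧ 3 * ‖z.2‖ ≤ ‖(f.toFun z).2‖ := by
  have hM0 : 0 ≤ M := le_trans (norm_nonneg _) (hfc 0)
  have hD0 : (0:ℝ) ≤ (D:ℝ) := Nat.cast_nonneg _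
  set t := ‖z.2‖ with htdef
  have hmR : 2 * M * D + 16 * Δ + 16 ≤ m * R := by
    rw [hR]; field_simp; nlinarith
  have hR2 : 2 ≤ R := by
    have : 0 ≤ (2 * M * D + 16 * Δ + 16) / m := by positivity
    linarith
  have ht2 : 2 ≤ t := le_trans hR2 h1
  have ht1 : 1 ≤ t := by linarith
  have ht0 : 0 < t := by linarith
  have hmt : 2 * M * D + 16 * Δ + 16 ≤ m * t :=
    le_trans hmR (by nlinarith)
  have hAt : 2 * A ≤ t := by
    have h0 : 0 ≤ (2 * M * D + 16 * Δ + 16) / m := by positivity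
    have h1' := h1; rw [hR] at h1'; linarith
  have hfac : 15 ≤ m * t - M * D - Δ := by nlinarith
  have hpos : 0 ≤ m * t - M * D := by nlinarith
  have hplow := poly_lower f.p m M D f.hdeg hfD hfc hfm hm0 z.2 ht1 hpos
  have habs2 : t * (m * t - M * D - Δ) ≤ ‖(f.toFun z).2‖ := by
    show _ ≤ ‖f.p.eval z.2 - f.δ * z.1‖
    have h3 : ‖f.p.eval z.2‖ ≤ ‖f.p.eval z.2 - f.δ * z.1‖ + ‖f.δ * z.1‖ := by
      have h4 := norm_add_le (f.p.eval z.2 - f.δ * z.1) (f.δ * z.1)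
      simpa using h4
    have h5 : ‖f.δ * z.1‖ ≤ Δ * t := by
      rw [norm_mul]
      exact mul_le_mul hfδ h2 (norm_nonneg _) (by linarith)
    nlinarith
  have h15 : 15 * t ≤ ‖(f.toFun z).2‖ := by nlinarith
  constructor
  · show max R (‖(f.toFun z).1‖) < ‖(f.toFun z).2‖
    have ha1 : ‖(f.toFun z).1‖ ≤ t + A := by
      show ‖z.2 + f.a‖ ≤ t + A
      exact le_trans (norm_add_le _ _) (by gcongr)
    have hmax : max R (‖(f.toFun z).1‖) ≤ max t (t + A) :=
      max_le_max h1 ha1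
    have hmm : max t (t + A) = t + A := max_eq_right (by linarith)
    calc max R (‖(f.toFun z).1‖) ≤ t + A := by rw [hmm] at hmax; exact hmax
      _ < 15 * t := by nlinarith
      _ ≤ _ := h15
  · linarith

lemma key_minus (D : ℕ) (A Δ m M R : ℝ) (hm0 : 0 < m) (hA0 : 0 ≤ A) (hΔ0 : 0 < Δ)
    (hR : R = 2 + 2 * A + (2 * M * D + 16 * Δ + 16) / m)
    (f : HenonMap) (hfD : f.p.natDegree ≤ D) (hfa : ‖f.a‖ ≤ A)
    (hfδ : ‖f.δ‖ ≤ Δ) (hfc : ∀ i, ‖f.p.coeff i‖ ≤ M)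
    (hfm : m ≤ ‖f.p.leadingCoeff‖)
    (z : ℂ × ℂ) (h1 : R ≤ ‖z.1‖) (h2 : ‖z.2‖ ≤ ‖z.1‖) :
    f.invFun z ∈ VMinus R ∧ 3 * ‖z.1‖ ≤ ‖(f.invFun z).1‖ := by
  have hM0 : 0 ≤ M := le_trans (norm_nonneg _) (hfc 0)
  have hD0 : (0:ℝ) ≤ (D:ℝ) := Nat.cast_nonneg _
  set t := ‖z.1‖ with htdef
  set s := ‖z.1 - f.a‖ with hsdef
  have hmR : 2 * M * D + 16 * Δ + 16 ≤ m * R := by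
    rw [hR]; field_simp; nlinarith
  have hR2 : 2 ≤ R := by
    have : 0 ≤ (2 * M * D + 16 * Δ + 16) / m := by positivity
    linarith
  have ht2 : 2 ≤ t := le_trans hR2 h1
  have ht0 : 0 < t := by linarith
  have hmt : 2 * M * D + 16 * Δ + 16 ≤ m * t := le_trans hmR (by nlinarith)
  have hAt : 2 * A ≤ t := by
    have h0 : 0 ≤ (2 * M * D + 16 * Δ + 16) / m := by positivity
    have h1' := h1; rw [hR] at h1'; linarith
  have hsub : t - A ≤ s := by
    have h4 := norm_add_le (z.1 - f.a) f.a
    simp only [sub_add_cancel] at h4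
    linarith
  have hsup : s ≤ t + A := by
    have h4 := norm_sub_le z.1 f.a
    rw [hsdef]; linarith
  have hs1 : 1 ≤ s := by nlinarith
  have hposs : 0 ≤ m * s - M * D := by nlinarith
  have hplow := poly_lower f.p m M D f.hdeg hfD hfc hfm hm0 (z.1 - f.a) hs1 hposs
  have hnum : s * (m * s - M * D) - t ≤ ‖f.p.eval (z.1 - f.a) - z.2‖ := by
    have h4 := norm_add_le (f.p.eval (z.1 - f.a) - z.2) z.2
    simp only [sub_add_cancel] at h4
    linarith
  have hshalf : t / 2 ≤ s := by linarith
  have hms : 8 * Δ + 8 ≤ m * s - M * D := by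
    nlinarith [mul_nonneg hm0.le (by linarith : (0:ℝ) ≤ s - t / 2)]
  have hprod : (t / 2) * (8 * Δ + 8) ≤ s * (m * s - M * D) :=
    mul_le_mul hshalf hms (by positivity) (by linarith)
  have hkey : 4 * Δ * t + t ≤ s * (m * s - M * D) - t := by nlinarith
  have hδ0 : 0 < ‖f.δ‖ := norm_pos_iff.mpr f.hδ
  have habs1 : ‖(f.invFun z).1‖
      = (‖f.δ‖)⁻¹ * ‖f.p.eval (z.1 - f.a) - z.2‖ := by
    show ‖f.δ⁻¹ * _‖ = _
    rw [norm_mul, norm_inv]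
  have hY : ‖f.δ‖ * ‖(f.invFun z).1‖
      = ‖f.p.eval (z.1 - f.a) - z.2‖ := by
    rw [habs1, ← mul_assoc, mul_inv_cancel₀ (ne_of_gt hδ0), one_mul]
  have hX0 : 0 ≤ ‖(f.invFun z).1‖ := norm_nonneg _
  have hup : ‖f.δ‖ * ‖(f.invFun z).1‖ ≤ Δ * ‖(f.invFun z).1‖ :=
    mul_le_mul_of_nonneg_right hfδ hX0
  have hΔX : 4 * Δ * t + t ≤ Δ * ‖(f.invFun z).1‖ := by linarith
  have h4t : 4 * t ≤ ‖(f.invFun z).1‖ := by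
    by_contra hcon
    push_neg at hcon
    have : Δ * ‖(f.invFun z).1‖ < Δ * (4 * t) :=
      mul_lt_mul_of_pos_left hcon hΔ0
    linarith
  have hs2 : ‖(f.invFun z).2‖ = s := rfl
  constructor
  · show max R (‖(f.invFun z).2‖) < ‖(f.invFun z).1‖
    rw [hs2]
    have : max R s < 4 * t := by
      apply max_lt <;> linarith
    linarith
  · linarith

lemma fwd_poly (γ : ℤ → HenonMap) (N : ℕ) :
    ∃ P Q : Polynomial ℂ, ∀ t : ℂ, fwd γ N (0, t) = (Polynomial.eval t P, Polynomial.eval t Q) := by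
  induction N with
  | zero => exact ⟨Polynomial.C 0, Polynomial.X, fun t => by simp [fwd]⟩
  | succ n ih =>
    obtain ⟨P, Q, h⟩ := ih
    refine ⟨Q + Polynomial.C (γ (n : ℤ)).a,
      (γ (n : ℤ)).p.comp Q - Polynomial.C (γ (n : ℤ)).δ * P, fun t => ?_⟩
    have e : fwd γ (n + 1) (0, t) = (γ (n : ℤ)).toFun (fwd γ n (0, t)) := rfl
    rw [e, h]
    simp [HenonMap.toFun, Polynomial.eval_comp]

lemma fwd_injective (γ : ℤ → HenonMap) (N : ℕ) : Function.Injective (fwd γ N) := by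
  induction N with
  | zero => exact fun a b h => h
  | succ n ih => exact fun a b h => ih ((γ (n : ℤ)).toFun_inj h)

lemma exists_not_vplus (γ : ℤ → HenonMap) (N : ℕ) (R : ℝ) (hR : 0 < R) :
    ∃ q : ℂ × ℂ, q.1 = 0 ∧ fwd γ N q ∉ VPlus R := by
  obtain ⟨P, Q, hPQ⟩ := fwd_poly γ N
  by_contra hcon
  push_neg at hcon
  have hall : ∀ t : ℂ, max R (‖Polynomial.eval t P‖) < ‖Polynomial.eval t Q‖ := by
    intro t
    have h := hcon (0, t) rfl
    rw [hPQ t] at h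
    exact h
  have hQdeg : Q.degree ≤ 0 := by
    by_contra hd
    push_neg at hd
    obtain ⟨t, ht⟩ := Complex.exists_root hd
    have h := hall t
    have ht' : Polynomial.eval t Q = 0 := ht
    rw [ht', norm_zero] at h
    have := lt_of_le_of_lt (le_max_left R _) h
    linarith
  obtain ⟨qc, hQc⟩ : ∃ c : ℂ, Q = Polynomial.C c := ⟨_, Polynomial.eq_C_of_degree_le_zero hQdeg⟩
  have hRc : R < ‖qc‖ := by
    have h := hall 0
    have h2 := lt_of_le_of_lt (le_max_left R _) h
    rwa [hQc, Polynomial.eval_C] at h2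
  have hc0 : qc ≠ 0 := by
    intro h
    rw [h, norm_zero] at hRc
    linarith
  have hPdeg : P.degree ≤ 0 := by
    by_contra hd
    push_neg at hd
    have hd2 : 0 < (P - Polynomial.C (2 * qc)).degree := by
      rw [Polynomial.degree_sub_C hd]; exact hd
    obtain ⟨t, ht⟩ := Complex.exists_root hd2
    have h0 : Polynomial.eval t (P - Polynomial.C (2 * qc)) = 0 := ht
    rw [Polynomial.eval_sub, Polynomial.eval_C, sub_eq_zero] at h0
    have h := hall t
    have h2 := lt_of_le_of_lt (le_max_right R _) h
    rw [h0, hQc, Polynomial.eval_C, norm_mul] at h2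
    have hcp : 0 < ‖qc‖ := norm_pos_iff.mpr hc0
    have h2' : ‖(2 : ℂ)‖ = 2 := by norm_num
    rw [h2'] at h2
    linarith
  have hPc : P = Polynomial.C (P.coeff 0) := Polynomial.eq_C_of_degree_le_zero hPdeg
  have heq : fwd γ N (0, 0) = fwd γ N (0, 1) := by
    rw [hPQ 0, hPQ 1, hPc, hQc]
    simp
  have h01 : ((0 : ℂ), (0 : ℂ)) = ((0 : ℂ), (1 : ℂ)) := fwd_injective γ N heq
  have : (0 : ℂ) = 1 := congrArg Prod.snd h01
  exact one_ne_zero this.symm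
/-- `K_γ = K_γ⁺ ∩ K_γ⁻` is nonempty, compact, and contained in the
closure of `D_{R₀}`, uniformly in `γ`. -/
theorem stmt_16 (Γ : Set HenonMap) (hne : Γ.Nonempty) (hΓ : ParamBounded Γ) :
    ∃ R₀ : ℝ, 0 < R₀ ∧ ∀ γ : ℤ → HenonMap, (∀ j : ℤ, γ j ∈ Γ) →
      (KPlus γ ∩ KMinus γ).Nonempty ∧ IsCompact (KPlus γ ∩ KMinus γ) ∧
      KPlus γ ∩ KMinus γ ⊆ closure (DDisk R₀) := by
  classical
  obtain ⟨D, A, d₀, Δ, m, M, hD2, hA0, hd₀0, hd₀Δ, hm0, hmM, hmem⟩ := hΓ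
  have hΔ0 : 0 < Δ := lt_of_lt_of_le hd₀0 hd₀Δ
  obtain ⟨f₀, hf₀⟩ := hne
  have hM0 : 0 ≤ M := le_trans (norm_nonneg _) ((hmem f₀ hf₀).2.2.2.2.1 0)
  set R₀ : ℝ := 2 + 2 * A + (2 * M * D + 16 * Δ + 16) / m with hR₀def
  have hquot : 0 ≤ (2 * M * D + 16 * Δ + 16) / m := by positivity
  have hR2 : 2 ≤ R₀ := by rw [hR₀def]; linarith
  have hR₀pos : 0 < R₀ := by linarith
  refine ⟨R₀, hR₀pos, ?_⟩
  intro γ hγ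
  -- the two basic escape estimates
  have keyP : ∀ f ∈ Γ, ∀ z : ℂ × ℂ, R₀ ≤ ‖z.2‖ → ‖z.1‖ ≤ ‖z.2‖ →
      f.toFun z ∈ VPlus R₀ ∧ 3 * ‖z.2‖ ≤ ‖(f.toFun z).2‖ := by
    intro f hf z hz1 hz2
    obtain ⟨h1, h2, _h3, h4, h5, h6⟩ := hmem f hf
    exact key_plus D A Δ m M R₀ hm0 hA0 hΔ0 hR₀def f h1 h2 h4 h5 h6 z hz1 hz2
  have keyM : ∀ f ∈ Γ, ∀ z : ℂ × ℂ, R₀ ≤ ‖z.1‖ → ‖z.2‖ ≤ ‖z.1‖ →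
      f.invFun z ∈ VMinus R₀ ∧ 3 * ‖z.1‖ ≤ ‖(f.invFun z).1‖ := by
    intro f hf z hz1 hz2
    obtain ⟨h1, h2, _h3, h4, h5, h6⟩ := hmem f hf
    exact key_minus D A Δ m M R₀ hm0 hA0 hΔ0 hR₀def f h1 h2 h4 h5 h6 z hz1 hz2
  have vplusS : ∀ w : ℂ × ℂ, w ∈ VPlus R₀ →
      R₀ ≤ ‖w.2‖ ∧ ‖w.1‖ ≤ ‖w.2‖ := by
    intro w hw
    have hw' : max R₀ (‖w.1‖) < ‖w.2‖ := hw
    exact ⟨le_of_lt (lt_of_le_of_lt (le_max_left _ _) hw'),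
      le_of_lt (lt_of_le_of_lt (le_max_right _ _) hw')⟩
  have vminusS : ∀ w : ℂ × ℂ, w ∈ VMinus R₀ →
      R₀ ≤ ‖w.1‖ ∧ ‖w.2‖ ≤ ‖w.1‖ := by
    intro w hw
    have hw' : max R₀ (‖w.2‖) < ‖w.1‖ := hw
    exact ⟨le_of_lt (lt_of_le_of_lt (le_max_left _ _) hw'),
      le_of_lt (lt_of_le_of_lt (le_max_right _ _) hw')⟩
  have backP : ∀ f ∈ Γ, ∀ w : ℂ × ℂ, f.invFun w ∈ VPlus R₀ → w ∈ VPlus R₀ := by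
    intro f hf w hw
    have h := (keyP f hf _ (vplusS _ hw).1 (vplusS _ hw).2).1
    rwa [HenonMap.toFun_invFun'] at h
  have backM : ∀ f ∈ Γ, ∀ w : ℂ × ℂ, f.toFun w ∈ VMinus R₀ → w ∈ VMinus R₀ := by
    intro f hf w hw
    have h := (keyM f hf _ (vminusS _ hw).1 (vminusS _ hw).2).1
    rwa [HenonMap.invFun_toFun'] at h
  have memS : ∀ w : ℂ × ℂ, ¬(‖w.1‖ ≤ R₀ ∧ ‖w.2‖ ≤ R₀) →
      (R₀ ≤ ‖w.2‖ ∧ ‖w.1‖ ≤ ‖w.2‖) ∨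
      (R₀ ≤ ‖w.1‖ ∧ ‖w.2‖ ≤ ‖w.1‖) := by
    intro w hw
    rcases le_total (‖w.1‖) (‖w.2‖) with hc | hc
    · left
      refine ⟨?_, hc⟩
      by_contra hlt; push_neg at hlt
      exact hw ⟨le_trans hc (le_of_lt hlt), le_of_lt hlt⟩
    · right
      refine ⟨?_, hc⟩
      by_contra hlt; push_neg at hlt
      exact hw ⟨le_of_lt hlt, le_trans hc (le_of_lt hlt)⟩
  -- forward orbits stay outside `VMinus` once outside it
  have hfwdM : ∀ (σ : ℤ → HenonMap), (∀ j, σ j ∈ Γ) → ∀ w : ℂ × ℂ, w ∉ VMinus R₀ →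
      ∀ n : ℕ, fwd σ n w ∉ VMinus R₀ := by
    intro σ hσ w hw n
    induction n with
    | zero => exact hw
    | succ n ih =>
      intro hmem'
      rw [show fwd σ (n + 1) w = (σ (n : ℤ)).toFun (fwd σ n w) from rfl] at hmem'
      exact ih (backM _ (hσ _) _ hmem')
  -- backward orbits stay outside `VPlus` once outside it
  have hbwdP : ∀ (σ : ℤ → HenonMap), (∀ j, σ j ∈ Γ) → ∀ w : ℂ × ℂ, w ∉ VPlus R₀ →
      ∀ n : ℕ, bwd σ n w ∉ VPlus R₀ := by
    intro σ hσ w hw n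
    induction n with
    | zero => exact hw
    | succ n ih =>
      intro hmem'
      rw [show bwd σ (n + 1) w = (σ (-((n : ℤ) + 1))).invFun (bwd σ n w) from rfl] at hmem'
      exact ih (backP _ (hσ _) _ hmem')
  -- the trapping set
  have hboundF : ∀ z : ℂ × ℂ, (∀ n : ℕ, fwd γ n z ∉ VPlus R₀ ∧ bwd γ n z ∉ VMinus R₀) →
      ∀ n : ℕ, ‖(fwd γ n z).1‖ ≤ R₀ ∧ ‖(fwd γ n z).2‖ ≤ R₀ := by
    intro z hz n
    by_contra hcon
    rcases memS _ hcon with ⟨ha, hb⟩ | ⟨ha, hb⟩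
    · have h := (keyP (γ (n : ℤ)) (hγ _) _ ha hb).1
      exact (hz (n + 1)).1 h
    · cases n with
      | zero =>
        have h := (keyM (γ (-(((0 : ℕ) : ℤ) + 1))) (hγ _) (fwd γ 0 z) ha hb).1
        exact (hz 1).2 h
      | succ k =>
        have h := (keyM (γ (k : ℤ)) (hγ _) (fwd γ (k + 1) z) ha hb).1
        rw [show fwd γ (k + 1) z = (γ (k : ℤ)).toFun (fwd γ k z) from rfl,
          HenonMap.invFun_toFun'] at h
        exact hfwdM γ hγ z (hz 0).2 k h
  have hboundB : ∀ z : ℂ × ℂ, (∀ n : ℕ, fwd γ n z ∉ VPlus R₀ ∧ bwd γ n z ∉ VMinus R₀) →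
      ∀ n : ℕ, ‖(bwd γ n z).1‖ ≤ R₀ ∧ ‖(bwd γ n z).2‖ ≤ R₀ := by
    intro z hz n
    by_contra hcon
    rcases memS _ hcon with ⟨ha, hb⟩ | ⟨ha, hb⟩
    · cases n with
      | zero =>
        have h := (keyP (γ ((0 : ℕ) : ℤ)) (hγ _) (bwd γ 0 z) ha hb).1
        exact (hz 1).1 h
      | succ k =>
        have h := (keyP (γ (-((k : ℤ) + 1))) (hγ _) (bwd γ (k + 1) z) ha hb).1
        rw [show bwd γ (k + 1) z = (γ (-((k : ℤ) + 1))).invFun (bwd γ k z) from rfl,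
          HenonMap.toFun_invFun'] at h
        exact hbwdP γ hγ z (hz 0).1 k h
    · have h := (keyM (γ (-((n : ℤ) + 1))) (hγ _) (bwd γ n z) ha hb).1
      exact (hz (n + 1)).2 h
  have hnorm : ∀ w : ℂ × ℂ, ‖w‖ = max (‖w.1‖) (‖w.2‖) := by
    intro w
    rw [Prod.norm_def]
  -- identification of K with the trapping set
  have hAK : KPlus γ ∩ KMinus γ
      = {z : ℂ × ℂ | ∀ n : ℕ, fwd γ n z ∉ VPlus R₀ ∧ bwd γ n z ∉ VMinus R₀} := by
    apply Set.Subset.antisymm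
    · rintro z ⟨hzp, hzm⟩
      intro n
      constructor
      · intro hvp
        have grow : ∀ k : ℕ, fwd γ (n + k) z ∈ VPlus R₀ ∧
            3 ^ k * ‖(fwd γ n z).2‖ ≤ ‖(fwd γ (n + k) z).2‖ := by
          intro k
          induction k with
          | zero => exact ⟨hvp, by simp⟩
          | succ k ih =>
            have hS := vplusS _ ih.1
            have hk := keyP (γ ((n + k : ℕ) : ℤ)) (hγ _) _ hS.1 hS.2
            refine ⟨hk.1, ?_⟩
            have h3 : (3:ℝ) ^ (k + 1) * ‖(fwd γ n z).2‖
                = 3 * (3 ^ k * ‖(fwd γ n z).2‖) := by ring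
            rw [h3]
            calc 3 * (3 ^ k * ‖(fwd γ n z).2‖)
                ≤ 3 * ‖(fwd γ (n + k) z).2‖ := by linarith [ih.2]
              _ ≤ _ := hk.2
        have hzp' : IsBounded (Set.range fun n : ℕ => fwd γ n z) := hzp
        obtain ⟨Cb, hCb⟩ := isBounded_iff_forall_norm_le.mp hzp'
        have hY0 : R₀ ≤ ‖(fwd γ n z).2‖ := (vplusS _ hvp).1
        obtain ⟨k, hk⟩ := pow_unbounded_of_one_lt (Cb / R₀) (by norm_num : (1:ℝ) < 3)
        have h1 := (grow k).2
        have h2 : ‖(fwd γ (n + k) z).2‖ ≤ ‖fwd γ (n + k) z‖ := by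
          rw [hnorm]; exact le_max_right _ _
        have h3 : ‖fwd γ (n + k) z‖ ≤ Cb := hCb _ ⟨n + k, rfl⟩
        have h4 : Cb < 3 ^ k * R₀ := (div_lt_iff₀ hR₀pos).mp hk
        have h5 : (3:ℝ) ^ k * R₀ ≤ 3 ^ k * ‖(fwd γ n z).2‖ :=
          mul_le_mul_of_nonneg_left hY0 (by positivity)
        linarith
      · intro hvm
        have grow : ∀ k : ℕ, bwd γ (n + k) z ∈ VMinus R₀ ∧
            3 ^ k * ‖(bwd γ n z).1‖ ≤ ‖(bwd γ (n + k) z).1‖ := by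
          intro k
          induction k with
          | zero => exact ⟨hvm, by simp⟩
          | succ k ih =>
            have hS := vminusS _ ih.1
            have hk := keyM (γ (-(((n + k : ℕ) : ℤ) + 1))) (hγ _) _ hS.1 hS.2
            refine ⟨hk.1, ?_⟩
            have h3 : (3:ℝ) ^ (k + 1) * ‖(bwd γ n z).1‖
                = 3 * (3 ^ k * ‖(bwd γ n z).1‖) := by ring
            rw [h3]
            calc 3 * (3 ^ k * ‖(bwd γ n z).1‖)
                ≤ 3 * ‖(bwd γ (n + k) z).1‖ := by linarith [ih.2]
              _ ≤ _ := hk.2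
        have hzm' : IsBounded (Set.range fun n : ℕ => bwd γ n z) := hzm
        obtain ⟨Cb, hCb⟩ := isBounded_iff_forall_norm_le.mp hzm'
        have hY0 : R₀ ≤ ‖(bwd γ n z).1‖ := (vminusS _ hvm).1
        obtain ⟨k, hk⟩ := pow_unbounded_of_one_lt (Cb / R₀) (by norm_num : (1:ℝ) < 3)
        have h1 := (grow k).2
        have h2 : ‖(bwd γ (n + k) z).1‖ ≤ ‖bwd γ (n + k) z‖ := by
          rw [hnorm]; exact le_max_left _ _
        have h3 : ‖bwd γ (n + k) z‖ ≤ Cb := hCb _ ⟨n + k, rfl⟩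
        have h4 : Cb < 3 ^ k * R₀ := (div_lt_iff₀ hR₀pos).mp hk
        have h5 : (3:ℝ) ^ k * R₀ ≤ 3 ^ k * ‖(bwd γ n z).1‖ :=
          mul_le_mul_of_nonneg_left hY0 (by positivity)
        linarith
    · intro z hz
      have hz' : ∀ n : ℕ, fwd γ n z ∉ VPlus R₀ ∧ bwd γ n z ∉ VMinus R₀ := hz
      constructor
      · have hb : IsBounded (Set.range fun n : ℕ => fwd γ n z) := by
          refine isBounded_iff_forall_norm_le.mpr ⟨R₀, ?_⟩
          rintro x ⟨n, rfl⟩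
          rw [hnorm]
          exact max_le (hboundF z hz' n).1 (hboundF z hz' n).2
        exact hb
      · have hb : IsBounded (Set.range fun n : ℕ => bwd γ n z) := by
          refine isBounded_iff_forall_norm_le.mpr ⟨R₀, ?_⟩
          rintro x ⟨n, rfl⟩
          rw [hnorm]
          exact max_le (hboundB z hz' n).1 (hboundB z hz' n).2
        exact hb
  -- topology
  have hVPopen : IsOpen (VPlus R₀) := by
    have e : VPlus R₀ = {z : ℂ × ℂ | max R₀ (‖z.1‖) < ‖z.2‖} := rfl
    rw [e]
    exact isOpen_lt (continuous_const.max (continuous_norm.comp continuous_fst))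
      (continuous_norm.comp continuous_snd)
  have hVMopen : IsOpen (VMinus R₀) := by
    have e : VMinus R₀ = {z : ℂ × ℂ | max R₀ (‖z.2‖) < ‖z.1‖} := rfl
    rw [e]
    exact isOpen_lt (continuous_const.max (continuous_norm.comp continuous_snd))
      (continuous_norm.comp continuous_fst)
  have hcontF : ∀ n : ℕ, Continuous (fwd γ n) := by
    intro n
    induction n with
    | zero => exact continuous_id
    | succ n ih => exact Continuous.comp (γ (n : ℤ)).continuous_toFun ih
  have hcontB : ∀ n : ℕ, Continuous (bwd γ n) := by
    intro n
    induction n with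
    | zero => exact continuous_id
    | succ n ih => exact Continuous.comp (γ (-((n : ℤ) + 1))).continuous_invFun ih
  have hclosed : IsClosed {z : ℂ × ℂ | ∀ n : ℕ, fwd γ n z ∉ VPlus R₀ ∧ bwd γ n z ∉ VMinus R₀} := by
    have e : {z : ℂ × ℂ | ∀ n : ℕ, fwd γ n z ∉ VPlus R₀ ∧ bwd γ n z ∉ VMinus R₀}
        = ⋂ n : ℕ, ((fwd γ n ⁻¹' (VPlus R₀)ᶜ) ∩ (bwd γ n ⁻¹' (VMinus R₀)ᶜ)) := by
      ext z
      simp only [Set.mem_setOf_eq, Set.mem_iInter, Set.mem_inter_iff, Set.mem_preimage,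
        Set.mem_compl_iff]
    rw [e]
    exact isClosed_iInter fun n =>
      IsClosed.inter (hVPopen.isClosed_compl.preimage (hcontF n))
        (hVMopen.isClosed_compl.preimage (hcontB n))
  have hsubball : {z : ℂ × ℂ | ∀ n : ℕ, fwd γ n z ∉ VPlus R₀ ∧ bwd γ n z ∉ VMinus R₀}
      ⊆ Metric.closedBall 0 R₀ := by
    intro z hz
    have hz' : ∀ n : ℕ, fwd γ n z ∉ VPlus R₀ ∧ bwd γ n z ∉ VMinus R₀ := hz
    rw [Metric.mem_closedBall, dist_zero_right, hnorm]
    exact max_le (hboundF z hz' 0).1 (hboundF z hz' 0).2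
  have hcompact : IsCompact {z : ℂ × ℂ | ∀ n : ℕ, fwd γ n z ∉ VPlus R₀ ∧ bwd γ n z ∉ VMinus R₀} :=
    (isCompact_closedBall (0 : ℂ × ℂ) R₀).of_isClosed_subset hclosed hsubball
  -- nonemptiness via the finite trapping sets
  set C : ℕ → Set (ℂ × ℂ) := fun N =>
    {z : ℂ × ℂ | ∀ k : ℕ, k ≤ N → fwd γ k z ∉ VPlus R₀ ∧ bwd γ k z ∉ VMinus R₀} with hCdef
  have hCne : ∀ N : ℕ, (C N).Nonempty := by
    intro N
    set σ : ℤ → HenonMap := fun j => γ (j - N) with hσdef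
    have hσΓ : ∀ j, σ j ∈ Γ := fun j => hγ _
    obtain ⟨q, hq1, hqP⟩ := exists_not_vplus σ (2 * N) R₀ hR₀pos
    have hqM : q ∉ VMinus R₀ := by
      intro h
      have h2 : R₀ < ‖q.1‖ := lt_of_le_of_lt (le_max_left _ _) h
      rw [hq1, norm_zero] at h2
      linarith
    have hMall : ∀ k : ℕ, fwd σ k q ∉ VMinus R₀ := hfwdM σ hσΓ q hqM
    have hPfwd : ∀ j k : ℕ, fwd σ j q ∈ VPlus R₀ → fwd σ (j + k) q ∈ VPlus R₀ := by
      intro j k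
      induction k with
      | zero => exact id
      | succ k ih =>
        intro h
        have hS := vplusS _ (ih h)
        exact (keyP (σ ((j + k : ℕ) : ℤ)) (hσΓ _) _ hS.1 hS.2).1
    have hPall : ∀ j : ℕ, j ≤ 2 * N → fwd σ j q ∉ VPlus R₀ := by
      intro j hj hmem'
      have h := hPfwd j (2 * N - j) hmem'
      rw [Nat.add_sub_cancel' hj] at h
      exact hqP h
    refine ⟨fwd σ N q, ?_⟩
    have hfk : ∀ k : ℕ, fwd γ k (fwd σ N q) = fwd σ (N + k) q := by
      intro k
      induction k with
      | zero => rfl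
      | succ k ih =>
        have e : σ ((N + k : ℕ) : ℤ) = γ ((k : ℕ) : ℤ) := by
          simp only [hσdef]
          congr 1
          omega
        calc fwd γ (k + 1) (fwd σ N q) = (γ (k : ℤ)).toFun (fwd γ k (fwd σ N q)) := rfl
          _ = (γ (k : ℤ)).toFun (fwd σ (N + k) q) := by rw [ih]
          _ = (σ ((N + k : ℕ) : ℤ)).toFun (fwd σ (N + k) q) := by rw [e]
          _ = fwd σ (N + (k + 1)) q := rfl
    have hbk : ∀ k : ℕ, k ≤ N → bwd γ k (fwd σ N q) = fwd σ (N - k) q := by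
      intro k
      induction k with
      | zero => intro _; rfl
      | succ k ih =>
        intro hk
        have ihh := ih (by omega)
        have e2 : N - k = (N - (k + 1)) + 1 := by omega
        have e3 : σ (((N - (k + 1)) : ℕ) : ℤ) = γ (-((k : ℤ) + 1)) := by
          simp only [hσdef]
          congr 1
          omega
        rw [show bwd γ (k + 1) (fwd σ N q)
            = (γ (-((k : ℤ) + 1))).invFun (bwd γ k (fwd σ N q)) from rfl, ihh, e2]
        rw [show fwd σ ((N - (k + 1)) + 1) q
            = (σ (((N - (k + 1)) : ℕ) : ℤ)).toFun (fwd σ (N - (k + 1)) q) from rfl, e3,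
          HenonMap.invFun_toFun']
    intro k hk
    constructor
    · rw [hfk k]
      exact hPall (N + k) (by omega)
    · rw [hbk k hk]
      exact hMall (N - k)
  have hCclosed : ∀ N : ℕ, IsClosed (C N) := by
    intro N
    have e : C N = ⋂ k : ℕ, ⋂ _ : k ≤ N,
        ((fwd γ k ⁻¹' (VPlus R₀)ᶜ) ∩ (bwd γ k ⁻¹' (VMinus R₀)ᶜ)) := by
      ext z
      simp only [hCdef, Set.mem_setOf_eq, Set.mem_iInter, Set.mem_inter_iff, Set.mem_preimage,
        Set.mem_compl_iff]
    rw [e]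
    exact isClosed_iInter fun k => isClosed_iInter fun _ =>
      IsClosed.inter (hVPopen.isClosed_compl.preimage (hcontF k))
        (hVMopen.isClosed_compl.preimage (hcontB k))
  have hCmono : ∀ N : ℕ, C (N + 1) ⊆ C N := by
    intro N z hz k hk
    exact hz k (by omega)
  have hC1b : C 1 ⊆ Metric.closedBall 0 R₀ := by
    intro z hz
    have hz' : ∀ k : ℕ, k ≤ 1 → fwd γ k z ∉ VPlus R₀ ∧ bwd γ k z ∉ VMinus R₀ := hz
    rw [Metric.mem_closedBall, dist_zero_right, hnorm]
    by_contra hcon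
    have hcon' : ¬(‖z.1‖ ≤ R₀ ∧ ‖z.2‖ ≤ R₀) := by
      intro h
      exact hcon (max_le h.1 h.2)
    rcases memS _ hcon' with ⟨ha, hb⟩ | ⟨ha, hb⟩
    · exact (hz' 1 le_rfl).1 ((keyP (γ ((0 : ℕ) : ℤ)) (hγ _) z ha hb).1)
    · exact (hz' 1 le_rfl).2 ((keyM (γ (-(((0 : ℕ) : ℤ) + 1))) (hγ _) z ha hb).1)
  have hCcpt : IsCompact (C 1) :=
    (isCompact_closedBall (0 : ℂ × ℂ) R₀).of_isClosed_subset (hCclosed 1) hC1b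
  have hACn : {z : ℂ × ℂ | ∀ n : ℕ, fwd γ n z ∉ VPlus R₀ ∧ bwd γ n z ∉ VMinus R₀}
      = ⋂ N : ℕ, C (N + 1) := by
    ext z
    simp only [hCdef, Set.mem_setOf_eq, Set.mem_iInter]
    constructor
    · intro h N k _
      exact h k
    · intro h k
      exact h k k (by omega)
  have hAne : {z : ℂ × ℂ | ∀ n : ℕ, fwd γ n z ∉ VPlus R₀ ∧ bwd γ n z ∉ VMinus R₀}.Nonempty := by
    rw [hACn]
    exact IsCompact.nonempty_iInter_of_sequence_nonempty_isCompact_isClosed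
      (fun N => C (N + 1)) (fun N => hCmono (N + 1)) (fun N => hCne (N + 1)) hCcpt
      (fun N => hCclosed (N + 1))
  have hDball : DDisk R₀ = Metric.ball 0 R₀ := by
    ext z
    rw [Metric.mem_ball, dist_zero_right, hnorm]
    exact Iff.rfl
  refine ⟨?_, ?_, ?_⟩
  · rw [hAK]; exact hAne
  · rw [hAK]; exact hcompact
  · rw [hAK, hDball, closure_ball (0 : ℂ × ℂ) (ne_of_gt hR₀pos)]
    exact hsubball
end
end
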